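/- arXiv:1712.04704 — 6 statements merged into one kernel-verified Lean document; each statement's English description precedes it below -/
import Mathlib

section
/- Let Ω ⊂ ℝⁿ be closed and x̄ ∈ Ω. Then the limiting normal cone decomposes as N_Ω(x̄) = N̂_Ω(x̄) ∪ ⋃_{u ∈ T_Ω(x̄), ‖u‖ = 1} N_Ω(x̄; u). -/
open Filter Topology Set Pointwise

noncomputable section

namespace Paper

variable {E : Type*} [NormedAddCommGroup E] [InnerProductSpace ℝ E]
variable {F : Type*} [NormedAddCommGroup F] [InnerProductSpace ℝ F]

/-- The set `V_{ρ,δ}(u)`. -/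
def dirNbhdBase (u : E) (ρ δ : ℝ) : Set E :=
  {z | ‖z‖ ≤ ρ ∧ ‖‖u‖ • z - ‖z‖ • u‖ ≤ δ * ‖z‖ * ‖u‖}

/-- `V` is a directional neighborhood of the direction `u`. -/
def IsDirNbhd (V : Set E) (u : E) : Prop :=
  ∃ ρ > (0:ℝ), ∃ δ > (0:ℝ), dirNbhdBase u ρ δ ⊆ V

/-- Tangent (contingent/Bouligand) cone to `Ω` at `x`. -/
def tangentCone (Ω : Set E) (x : E) : Set E :=
  {u | ∃ (uk : ℕ → E) (tk : ℕ → ℝ), Tendsto uk atTop (𝓝 u) ∧ (∀ k, 0 < tk k) ∧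
    Tendsto tk atTop (𝓝 0) ∧ ∀ k, x + tk k • uk k ∈ Ω}

/-- Fréchet (regular) normal cone to `Ω` at `x` (empty if `x ∉ Ω`). -/
def frechetNC (Ω : Set E) (x : E) : Set E :=
  {ξ | x ∈ Ω ∧ ∀ ε > (0:ℝ), ∀ᶠ y in 𝓝[Ω] x, (inner ℝ ξ (y - x) : ℝ) ≤ ε * ‖y - x‖}

/-- Limiting (Mordukhovich) normal cone to `Ω` at `x`. -/
def limitingNC (Ω : Set E) (x : E) : Set E :=
  {ξ | ∃ (xk ξk : ℕ → E), (∀ k, xk k ∈ Ω) ∧ Tendsto xk atTop (𝓝 x) ∧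
    Tendsto ξk atTop (𝓝 ξ) ∧ ∀ k, ξk k ∈ frechetNC Ω (xk k)}

/-- Directional limiting normal cone to `Ω` at `x` in direction `u`. -/
def dirNC (Ω : Set E) (x : E) (u : E) : Set E :=
  {ξ | ∃ (tk : ℕ → ℝ) (uk ξk : ℕ → E), (∀ k, 0 < tk k) ∧ Tendsto tk atTop (𝓝 0) ∧
    Tendsto uk atTop (𝓝 u) ∧ Tendsto ξk atTop (𝓝 ξ) ∧
    ∀ k, ξk k ∈ frechetNC Ω (x + tk k • uk k)}

/-- The product `E × F` equipped with the (Euclidean) `ℓ²`-structure. -/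
abbrev P2 (E F : Type*) := WithLp 2 (E × F)

/-- Pairing constructor for `P2`. -/
def mk2 {E F : Type*} (x : E) (y : F) : P2 E F := (WithLp.equiv 2 (E × F)).symm (x, y)

/-- Graph of a single-valued mapping. -/
def graphFun (φ : E → F) : Set (P2 E F) := {p | ∃ x, p = mk2 x (φ x)}

/-- Graph of a multifunction. -/
def graphMulti (M : E → Set F) : Set (P2 E F) := {p | ∃ x y, p = mk2 x y ∧ y ∈ M x}

/-- Graphical derivative of a single-valued mapping. -/
def gderiv (φ : E → F) (x : E) (u : E) : Set F :=
  {v | mk2 u v ∈ tangentCone (graphFun φ) (mk2 x (φ x))}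

/-- Graphical derivative of a multifunction at `(x, y)`. -/
def gderivM (M : E → Set F) (x : E) (y : F) (u : E) : Set F :=
  {v | mk2 u v ∈ tangentCone (graphMulti M) (mk2 x y)}

/-- Directional limiting coderivative of a single-valued mapping:
`D*φ(x;(u,v))(η)`. -/
def dirCoderiv (φ : E → F) (x : E) (u : E) (v : F) (η : F) : Set E :=
  {ξ | mk2 ξ (-η) ∈ dirNC (graphFun φ) (mk2 x (φ x)) (mk2 u v)}

/-- Metric subregularity of the multifunction `M` at `(x, y) ∈ Gr M` in direction `u`. -/
def DirMetrSubreg (M : E → Set F) (x : E) (y : F) (u : E) : Prop :=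
  ∃ κ > (0:ℝ), ∃ V : Set E, IsDirNbhd V u ∧
    ∀ x', x' - x ∈ V → Metric.infDist x' {z | y ∈ M z} ≤ κ * Metric.infDist y (M x')

/-- Calmness of a single-valued mapping at `x` in direction `u`. -/
def DirCalm (φ : E → F) (x : E) (u : E) : Prop :=
  ∃ κ > (0:ℝ), ∃ V : Set E, IsDirNbhd V u ∧ ∀ x', x' - x ∈ V → ‖φ x' - φ x‖ ≤ κ * ‖x' - x‖

/-- Lipschitz continuity of a single-valued mapping near `x` in direction `u`. -/
def DirLipschitz (φ : E → F) (x : E) (u : E) : Prop :=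
  ∃ κ > (0:ℝ), ∃ V : Set E, IsDirNbhd V u ∧
    ∀ x₁ x₂, x₁ - x ∈ V → x₂ - x ∈ V → ‖φ x₁ - φ x₂‖ ≤ κ * ‖x₁ - x₂‖

/-- Inner semicompactness of `S` at `y` w.r.t. `Ω` in direction `v`. -/
def DirInnerSemicompact (S : F → Set E) (y : F) (Ω : Set F) (v : F) : Prop :=
  ∀ (t : ℕ → ℝ) (vk : ℕ → F), (∀ k, 0 < t k) → Tendsto t atTop (𝓝 0) →
    Tendsto vk atTop (𝓝 v) → (∀ k, y + t k • vk k ∈ Ω) →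
    ∃ (K : ℕ → ℕ) (xk : ℕ → E) (x : E), StrictMono K ∧
      (∀ k, xk k ∈ S (y + t (K k) • vk (K k))) ∧ Tendsto xk atTop (𝓝 x)

/-- Inner calmness of `S` at `(y, x) ∈ Gr S` w.r.t. `Ω` in direction `v`. -/
def DirInnerCalm (S : F → Set E) (y : F) (x : E) (Ω : Set F) (v : F) : Prop :=
  ∃ κ > (0:ℝ), ∃ V : Set F, IsDirNbhd V v ∧
    ∀ y', y' - y ∈ V → y' ∈ Ω → ∃ x' ∈ S y', ‖x - x'‖ ≤ κ * ‖y' - y‖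

/-- Epigraph of an extended-real-valued function, as a subset of `E ×₂ ℝ`. -/
def epiE (f : E → EReal) : Set (P2 E ℝ) := {p | ∃ (x : E) (α : ℝ), p = mk2 x α ∧ f x ≤ (α : EReal)}

/-- Graph of an extended-real-valued function, as a subset of `E ×₂ ℝ`. -/
def graphE (f : E → EReal) : Set (P2 E ℝ) := {p | ∃ (x : E) (α : ℝ), p = mk2 x α ∧ f x = (α : EReal)}

/-- Graphical derivative `Df(x)(h)` of an extended-real-valued function. -/
def gderivE (f : E → EReal) (x : E) (h : E) : Set ℝ :=
  {ν | mk2 h ν ∈ tangentCone (graphE f) (mk2 x (f x).toReal)}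

/-- Directional limiting subdifferential `∂f(x;(h,ν))`. -/
def dirSubdiff (f : E → EReal) (x : E) (h : E) (ν : ℝ) : Set E :=
  {ξ | mk2 ξ (-1 : ℝ) ∈ dirNC (epiE f) (mk2 x (f x).toReal) (mk2 h ν)}

/-- Directional singular limiting subdifferential `∂^∞ f(x;(h,ν))`. -/
def dirSingSubdiff (f : E → EReal) (x : E) (h : E) (ν : ℝ) : Set E :=
  {ξ | mk2 ξ (0 : ℝ) ∈ dirNC (epiE f) (mk2 x (f x).toReal) (mk2 h ν)}

/-- Fréchet (regular) subdifferential `∂̂f(x)`. -/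
def regSubdiff (f : E → EReal) (x : E) : Set E :=
  {ξ | ∀ ε > (0:ℝ), ∀ᶠ y in 𝓝 x,
    f x + ((((inner ℝ ξ (y - x) : ℝ)) - ε * ‖y - x‖ : ℝ) : EReal) ≤ f y}

/-- Analytic directional limiting subdifferential `∂ₐf(x;h)`. -/
def aDirSubdiff (f : E → EReal) (x : E) (h : E) : Set E :=
  {ξ | ∃ (t : ℕ → ℝ) (hk ξk : ℕ → E), (∀ k, 0 < t k) ∧ Tendsto t atTop (𝓝 0) ∧
    Tendsto hk atTop (𝓝 h) ∧ Tendsto ξk atTop (𝓝 ξ) ∧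
    Tendsto (fun k => f (x + t k • hk k)) atTop (𝓝 (f x)) ∧
    ∀ k, ξk k ∈ regSubdiff f (x + t k • hk k)}

/-- Domain of an extended-real-valued function. -/
def domE (f : E → EReal) : Set E := {x | f x ≠ ⊤ ∧ f x ≠ ⊥}

/-- Calmness of an extended-real-valued function at `x` in direction `h`
(understood w.r.t. its domain). -/
def DirCalmE (f : E → EReal) (x : E) (h : E) : Prop :=
  ∃ κ > (0:ℝ), ∃ V : Set E, IsDirNbhd V h ∧
    ∀ x', x' - x ∈ V → x' ∈ domE f → |(f x').toReal - (f x).toReal| ≤ κ * ‖x' - x‖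

/-- The set `N_{epi f}((x, f(x)); (h, ±∞))`; use `L = atTop` for `+∞` and `L = atBot` for `-∞`. -/
def NepiInfty (f : E → EReal) (x : E) (h : E) (L : Filter ℝ) : Set (P2 E ℝ) :=
  {q | ∃ (t νs : ℕ → ℝ) (hk : ℕ → E) (qk : ℕ → P2 E ℝ),
    (∀ k, 0 < t k) ∧ Tendsto t atTop (𝓝 0) ∧ Tendsto hk atTop (𝓝 h) ∧
    Tendsto νs atTop L ∧ Tendsto (fun k => t k * νs k) atTop (𝓝 0) ∧
    Tendsto qk atTop (𝓝 q) ∧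
    ∀ k, qk k ∈ frechetNC (epiE f) (mk2 x (f x).toReal + t k • mk2 (hk k) (νs k))}

/-- Directional differentiability: `f′(x;h) = d` as a limit over `t ↓ 0`, `h′ → h`. -/
def HasDirDeriv (f : E → EReal) (x : E) (h : E) (d : ℝ) : Prop :=
  Tendsto (fun p : ℝ × E => ((p.1⁻¹ : ℝ) : EReal) * (f (x + p.1 • p.2) - f x))
    ((𝓝[>] (0:ℝ)) ×ˢ 𝓝 h) (𝓝 (d : EReal))

abbrev Euc (n : ℕ) := EuclideanSpace ℝ (Fin n)

/-- **Lemma 2.1.** For closed `Ω` and `x̄ ∈ Ω`, the limiting normal cone is the union of the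
Fréchet normal cone and the directional limiting normal cones in unit tangent directions. -/
theorem limitingNC_eq_frechetNC_union_dirNC {n : ℕ} (Ω : Set (Euc n)) (hΩ : IsClosed Ω)
    (x : Euc n) (hx : x ∈ Ω) :
    limitingNC Ω x =
      frechetNC Ω x ∪ ⋃ u ∈ tangentCone Ω x ∩ {u : Euc n | ‖u‖ = 1}, dirNC Ω x u := by
  ext ξ
  simp only [Set.mem_union, Set.mem_iUnion, Set.mem_inter_iff, Set.mem_setOf_eq]
  constructor
  · rintro ⟨xk, ξk, hmem, hxk, hξk, hfr⟩
    by_cases hA : ∀ N, ∃ k ≥ N, xk k = x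
    · left
      refine ⟨hx, fun ε hε => ?_⟩
      obtain ⟨K, hK⟩ := Metric.tendsto_atTop.mp hξk (ε / 2) (by linarith)
      obtain ⟨k, hkK, hkx⟩ := hA K
      have h1 := (hfr k).2 (ε / 2) (by linarith)
      rw [hkx] at h1
      have hd : ‖ξ - ξk k‖ ≤ ε / 2 := by
        have := hK k hkK
        rw [dist_eq_norm] at this
        rw [norm_sub_rev]; linarith
      filter_upwards [h1] with y hy
      have hsplit : (inner ℝ ξ (y - x) : ℝ) =
          (inner ℝ (ξk k) (y - x) : ℝ) + (inner ℝ (ξ - ξk k) (y - x) : ℝ) := by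
        rw [← inner_add_left]; congr 1; abel
      have h2 : (inner ℝ (ξ - ξk k) (y - x) : ℝ) ≤ (ε / 2) * ‖y - x‖ := by
        calc (inner ℝ (ξ - ξk k) (y - x) : ℝ) ≤ ‖ξ - ξk k‖ * ‖y - x‖ := real_inner_le_norm _ _
          _ ≤ (ε / 2) * ‖y - x‖ := by
              apply mul_le_mul_of_nonneg_right hd (norm_nonneg _)
      rw [hsplit]; linarith
    · right
      push_neg at hA
      obtain ⟨N, hN⟩ := hA
      set yk : ℕ → Euc n := fun k => xk (k + N) with hykdef
      have hy : ∀ k, yk k ≠ x := fun k => hN (k + N) (Nat.le_add_left N k)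
      set tk : ℕ → ℝ := fun k => ‖yk k - x‖ with htkdef
      have htpos : ∀ k, 0 < tk k := fun k => norm_pos_iff.mpr (sub_ne_zero.mpr (hy k))
      set uk : ℕ → Euc n := fun k => (tk k)⁻¹ • (yk k - x) with hukdef
      have hyk : Tendsto yk atTop (𝓝 x) := hxk.comp (tendsto_add_atTop_nat N)
      have ht0 : Tendsto tk atTop (𝓝 0) := by
        have h := (hyk.sub (tendsto_const_nhds (x := x))).norm
        simpa using h
      have husph : ∀ k, uk k ∈ Metric.sphere (0 : Euc n) 1 := by
        intro k
        rw [mem_sphere_zero_iff_norm]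
        simp only [hukdef, norm_smul, Real.norm_eq_abs, abs_of_pos (inv_pos.mpr (htpos k))]
        exact inv_mul_cancel₀ (htpos k).ne'
      obtain ⟨u, hu, φ, hφ, huconv⟩ := (isCompact_sphere (0 : Euc n) 1).tendsto_subseq husph
      have hun : ‖u‖ = 1 := mem_sphere_zero_iff_norm.mp hu
      have heq : ∀ k, x + tk k • uk k = yk k := by
        intro k
        simp only [hukdef, smul_smul, mul_inv_cancel₀ (htpos k).ne', one_smul]
        abel
      have ht0' : Tendsto (fun k => tk (φ k)) atTop (𝓝 0) := ht0.comp hφ.tendsto_atTop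
      refine ⟨u, ⟨⟨fun k => uk (φ k), fun k => tk (φ k), huconv, fun k => htpos _, ht0',
          fun k => by rw [heq]; exact hmem _⟩, hun⟩,
        fun k => tk (φ k), fun k => uk (φ k), fun k => ξk (φ k + N),
        fun k => htpos _, ht0', huconv,
        hξk.comp ((tendsto_add_atTop_nat N).comp hφ.tendsto_atTop),
        fun k => by rw [heq]; exact hfr _⟩
  · rintro (hfr | ⟨u, ⟨hut, hun⟩, tk, uk, ξk, htpos, ht0, huk, hξk, hfrk⟩)
    · exact ⟨fun _ => x, fun _ => ξ, fun _ => hx, tendsto_const_nhds, tendsto_const_nhds,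
        fun _ => hfr⟩
    · refine ⟨fun k => x + tk k • uk k, ξk, fun k => (hfrk k).1, ?_, hξk, hfrk⟩
      have h : Tendsto (fun k => tk k • uk k) atTop (𝓝 ((0 : ℝ) • u)) := ht0.smul huk
      simpa using tendsto_const_nhds.add h

end Paper
end
end

section
/- Let ℝⁿ = ℝ^{n₁} × … × ℝ^{n_l}, let C_i ⊂ ℝ^{n_i} be closed for i = 1,…,l, set C = C₁ × … × C_l, and let x̄ = (x̄₁,…,x̄_l) ∈ C and h = (h₁,…,h_l) ∈ ℝⁿ. Then N_C(x̄; h) ⊂ N_{C₁}(x̄₁; h₁) × … × N_{C_l}(x̄_l; h_l). -/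
open Filter Topology Set Pointwise

noncomputable section

namespace Paper

variable {E : Type*} [NormedAddCommGroup E] [InnerProductSpace ℝ E]
variable {F : Type*} [NormedAddCommGroup F] [InnerProductSpace ℝ F]

lemma frechetNC_pi {ι : Type*} [Fintype ι] [DecidableEq ι] {f : ι → Type*}
    [∀ i, NormedAddCommGroup (f i)] [∀ i, InnerProductSpace ℝ (f i)]
    {C : ∀ i, Set (f i)} {y ξ : PiLp 2 f}
    (hξ : ξ ∈ frechetNC {z : PiLp 2 f | ∀ i, z i ∈ C i} y) (i : ι) :
    ξ i ∈ frechetNC (C i) (y i) := by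
  obtain ⟨hy, hξ⟩ := hξ
  refine ⟨hy i, fun ε hε => ?_⟩
  set φ : f i → PiLp 2 f :=
    fun w => (WithLp.equiv 2 _).symm (Function.update (WithLp.equiv 2 _ y) i w) with hφ
  have hcontφ : Continuous φ :=
    (PiLp.continuous_toLp 2 f).comp (continuous_const.update i continuous_id)
  have hdiff : ∀ w : f i, φ w - y = (WithLp.equiv 2 _).symm (Pi.single i (w - y i)) := by
    intro w
    refine PiLp.ext fun j => ?_
    rcases eq_or_ne j i with rfl | hj
    · simp [φ, WithLp.equiv_symm_apply, WithLp.equiv_apply]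
    · simp [φ, WithLp.equiv_symm_apply, WithLp.equiv_apply,
        Function.update_of_ne hj, Pi.single_eq_of_ne hj]
  have hφy : φ (y i) = y := by
    refine PiLp.ext fun j => ?_
    rcases eq_or_ne j i with rfl | hj
    · simp [φ, WithLp.equiv_symm_apply, WithLp.equiv_apply]
    · simp [φ, WithLp.equiv_symm_apply, WithLp.equiv_apply, Function.update_of_ne hj]
  have htend : Tendsto φ (𝓝[C i] (y i)) (𝓝[{z : PiLp 2 f | ∀ j, z j ∈ C j}] y) := by
    rw [tendsto_nhdsWithin_iff]
    constructor
    · have h1 : Tendsto φ (𝓝[C i] (y i)) (𝓝 (φ (y i))) :=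
        (hcontφ.tendsto _).mono_left nhdsWithin_le_nhds
      rwa [hφy] at h1
    · filter_upwards [self_mem_nhdsWithin] with w hw j
      rcases eq_or_ne j i with rfl | hj
      · simpa [φ, WithLp.equiv_symm_apply, WithLp.equiv_apply] using hw
      · simpa [φ, WithLp.equiv_symm_apply, WithLp.equiv_apply,
          Function.update_of_ne hj] using hy j
  have key := htend.eventually (hξ ε hε)
  filter_upwards [key] with w hw
  have hinner : (inner ℝ ξ (φ w - y) : ℝ) = inner ℝ (ξ i) (w - y i) := by
    rw [hdiff, PiLp.inner_apply, Fintype.sum_eq_single i]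
    · simp [WithLp.equiv_symm_apply]
    · intro j hj; simp [WithLp.equiv_symm_apply, Pi.single_eq_of_ne hj]
  have hnorm : ‖φ w - y‖ = ‖w - y i‖ := by
    rw [hdiff, WithLp.equiv_symm_apply, PiLp.norm_toLp_single]
  rw [hinner, hnorm] at hw
  exact hw

/-- **Proposition 2.2.** Directional limiting normal cone of a product is contained in the
product of the directional limiting normal cones. -/
theorem dirNC_pi_subset {l : ℕ} (n : Fin l → ℕ) (C : ∀ i, Set (Euc (n i)))
    (hC : ∀ i, IsClosed (C i)) (x h : PiLp 2 (fun i => Euc (n i))) (hx : ∀ i, x i ∈ C i) :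
    dirNC {z : PiLp 2 (fun i => Euc (n i)) | ∀ i, z i ∈ C i} x h ⊆
      {ξ : PiLp 2 (fun i => Euc (n i)) | ∀ i, ξ i ∈ dirNC (C i) (x i) (h i)} := by
  rintro ξ ⟨tk, uk, ξk, htk, htk0, huk, hξk, hfk⟩ i
  have heval : Continuous (fun z : PiLp 2 (fun i => Euc (n i)) => z i) :=
    (continuous_apply i).comp (PiLp.continuous_ofLp 2 _)
  refine ⟨tk, fun k => uk k i, fun k => ξk k i, htk, htk0,
    (heval.tendsto _).comp huk, (heval.tendsto _).comp hξk, fun k => ?_⟩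
  have := frechetNC_pi (hfk k) i
  exact this


end Paper
end
end

section
/- Let Q ⊂ ℝᵐ be closed, φ : ℝⁿ → ℝᵐ continuous, C := φ⁻¹(Q), x̄ ∈ C, and assume the multifunction F(x) = Q − φ(x) is metrically subregular at (x̄, 0) in direction h ∈ ℝⁿ and, in addition, that φ is calm at x̄ in direction h. Then N_C(x̄; h) ⊂ ⋃_{v ∈ Dφ(x̄)(h) ∩ T_Q(φ(x̄))} D*φ(x̄; (h, v)) N_Q(φ(x̄); v). -/
open Filter Topology Set Pointwise

noncomputable section

namespace Paper

variable {E : Type*} [NormedAddCommGroup E] [InnerProductSpace ℝ E]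
variable {F : Type*} [NormedAddCommGroup F] [InnerProductSpace ℝ F]

/-! ### Auxiliary lemmas -/

section Aux

variable {X : Type*} [NormedAddCommGroup X] [InnerProductSpace ℝ X]

/-- If `ψ` is differentiable at `p` with gradient `g` and `p` is a local minimizer of `ψ`
over `Ω`, then `-g` is a Fréchet normal to `Ω` at `p`. -/
lemma neg_grad_mem_frechetNC {Ω : Set X} {p : X} (hp : p ∈ Ω) {ψ : X → ℝ}
    {D : X →L[ℝ] ℝ} {g : X} (hd : HasFDerivAt ψ D p) (hD : ∀ v, D v = (inner ℝ g v : ℝ))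
    (hmin : ∀ᶠ q in 𝓝[Ω] p, ψ p ≤ ψ q) : -g ∈ frechetNC Ω p := by
  refine ⟨hp, fun ε hε => ?_⟩
  have h1 : ∀ᶠ q in 𝓝 p, ‖ψ q - ψ p - D (q - p)‖ ≤ ε * ‖q - p‖ :=
    (hd.isLittleO.def hε)
  filter_upwards [hmin, h1.filter_mono nhdsWithin_le_nhds] with q hq hq1
  have h2 : (inner ℝ (-g) (q - p) : ℝ) = -(D (q - p)) := by
    rw [hD]; simp [inner_neg_left]
  have h3 : |ψ q - ψ p - D (q - p)| ≤ ε * ‖q - p‖ := by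
    simpa [Real.norm_eq_abs] using hq1
  have h4 := (abs_le.mp h3).2
  linarith [h2, h4, hq]

/-- Derivative of the smoothed norm `u ↦ √(‖u‖² + c)`. -/
lemma hasFDerivAt_theta {c : ℝ} (hc : 0 < c) (u : X) :
    HasFDerivAt (fun v : X => Real.sqrt (‖v‖^2 + c))
      ((Real.sqrt (‖u‖^2 + c))⁻¹ • innerSL ℝ u) u := by
  have h1 : HasFDerivAt (fun v : X => ‖v‖^2 + c) (2 • innerSL ℝ u) u := by
    simpa using ((hasFDerivAt_id u).norm_sq).add_const c
  have hpos : (0:ℝ) < ‖u‖^2 + c := by positivity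
  have h2 := h1.sqrt hpos.ne'
  convert h2 using 1
  ext v
  simp only [ContinuousLinearMap.smul_apply, ContinuousLinearMap.coe_smul', Pi.smul_apply]
  have hs : Real.sqrt (‖u‖^2 + c) ≠ 0 := (Real.sqrt_pos.mpr hpos).ne'
  field_simp
  ring

lemma norm_le_theta (c : ℝ) (hc : 0 ≤ c) (u : X) : ‖u‖ ≤ Real.sqrt (‖u‖^2 + c) := by
  calc ‖u‖ = Real.sqrt (‖u‖^2) := (Real.sqrt_sq (norm_nonneg u)).symm
    _ ≤ Real.sqrt (‖u‖^2 + c) := Real.sqrt_le_sqrt (by linarith)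

lemma theta_pos {c : ℝ} (hc : 0 < c) (u : X) : 0 < Real.sqrt (‖u‖^2 + c) :=
  Real.sqrt_pos.mpr (by positivity)

/-- Entering a directional neighborhood along perturbed rays. -/
lemma exists_entry_const {h : X} {ρ δ : ℝ} (hδ : 0 < δ) :
    ∃ c > (0:ℝ), ∀ t : ℝ, 0 < t → ∀ z : X, ‖z - t • h‖ ≤ c * t → t * (‖h‖ + c) ≤ ρ →
      z ∈ dirNbhdBase h ρ δ := by
  rcases eq_or_ne h 0 with hh | hh
  · refine ⟨1, one_pos, fun t ht z hz hρ' => ?_⟩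
    subst hh
    constructor
    · have : ‖z‖ ≤ 1 * t := by simpa using hz
      calc ‖z‖ ≤ 1 * t := this
        _ ≤ t * (‖(0:X)‖ + 1) := by simp [mul_comm]
        _ ≤ ρ := hρ'
    · simp
  · have hnh : 0 < ‖h‖ := norm_pos_iff.mpr hh
    refine ⟨min (δ * ‖h‖ / 4) (‖h‖ / 2), by positivity, fun t ht z hz hρ' => ?_⟩
    set c := min (δ * ‖h‖ / 4) (‖h‖ / 2) with hcdef
    have hc1 : c ≤ δ * ‖h‖ / 4 := min_le_left _ _
    have hc2 : c ≤ ‖h‖ / 2 := min_le_right _ _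
    have hc0 : 0 < c := by positivity
    have hth : ‖t • h‖ = t * ‖h‖ := by
      rw [norm_smul, Real.norm_eq_abs, abs_of_pos ht]
    have hzle : ‖z‖ ≤ t * (‖h‖ + c) := by
      calc ‖z‖ ≤ ‖t • h‖ + ‖z - t • h‖ := by
            simpa using norm_add_le (t • h) (z - t • h)
        _ ≤ t * ‖h‖ + c * t := by rw [hth]; linarith
        _ = t * (‖h‖ + c) := by ring
    refine ⟨hzle.trans hρ', ?_⟩
    have hzge : t * (‖h‖ - c) ≤ ‖z‖ := by
      have : |‖z‖ - ‖t • h‖| ≤ ‖z - t • h‖ := abs_norm_sub_norm_le _ _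
      rw [hth] at this
      have := (abs_le.mp this).1
      linarith
    have key : ‖h‖ • z - ‖z‖ • h = ‖h‖ • (z - t • h) + (t * ‖h‖ - ‖z‖) • h := by
      rw [smul_sub, sub_smul, smul_smul]
      ring_nf
      module
    have habs : |t * ‖h‖ - ‖z‖| ≤ c * t := by
      have : |‖z‖ - ‖t • h‖| ≤ ‖z - t • h‖ := abs_norm_sub_norm_le _ _
      rw [hth, abs_sub_comm] at this
      linarith
    have hb : ‖‖h‖ • z - ‖z‖ • h‖ ≤ 2 * c * t * ‖h‖ := by
      rw [key]
      calc ‖‖h‖ • (z - t • h) + (t * ‖h‖ - ‖z‖) • h‖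
          ≤ ‖‖h‖ • (z - t • h)‖ + ‖(t * ‖h‖ - ‖z‖) • h‖ := norm_add_le _ _
        _ = ‖h‖ * ‖z - t • h‖ + |t * ‖h‖ - ‖z‖| * ‖h‖ := by
            rw [norm_smul, norm_smul, Real.norm_eq_abs, Real.norm_eq_abs,
              abs_of_nonneg (norm_nonneg h)]
        _ ≤ ‖h‖ * (c * t) + (c * t) * ‖h‖ := by
            have h1 := mul_le_mul_of_nonneg_left hz (norm_nonneg h)
            have h2 := mul_le_mul_of_nonneg_right habs (norm_nonneg h)
            nlinarith [norm_nonneg h]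
        _ = 2 * c * t * ‖h‖ := by ring
    have hzh : t * (‖h‖ / 2) ≤ ‖z‖ := by
      have : ‖h‖ - c ≥ ‖h‖ / 2 := by linarith
      nlinarith
    calc ‖‖h‖ • z - ‖z‖ • h‖ ≤ 2 * c * t * ‖h‖ := hb
      _ ≤ δ * (t * (‖h‖ / 2)) * ‖h‖ := by
          nlinarith [mul_le_mul_of_nonneg_right (show 2*c ≤ δ*‖h‖/2 by linarith)
            (mul_pos ht hnh).le]
      _ ≤ δ * ‖z‖ * ‖h‖ := by nlinarith

/-- Shift invariance of the distance. -/
lemma infDist_zero_shift {Y : Type*} [NormedAddCommGroup Y] (v : Y) (Q : Set Y) :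
    Metric.infDist (0 : Y) {y | v + y ∈ Q} = Metric.infDist v Q := by
  have himg : {y : Y | v + y ∈ Q} = (fun q => q - v) '' Q := by
    ext y
    simp only [mem_setOf_eq, mem_image]
    constructor
    · intro hy; exact ⟨v + y, hy, by abel⟩
    · rintro ⟨q, hq, rfl⟩
      have : v + (q - v) = q := by abel
      rw [this]; exact hq
  have hiso : Isometry (fun q : Y => q - v) := by
    refine Isometry.of_dist_eq fun a b => ?_
    rw [dist_eq_norm, dist_eq_norm]
    congr 1
    abel
  have h0 : (fun q : Y => q - v) v = 0 := by simp
  rw [himg, ← h0, Metric.infDist_image hiso]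

/-- Convergence of pairs in the `ℓ²`-product. -/
lemma tendsto_mk2 {Y Z : Type*} [NormedAddCommGroup Y] [InnerProductSpace ℝ Y]
    [NormedAddCommGroup Z] [InnerProductSpace ℝ Z] {α : Type*} {l : Filter α}
    {f : α → Y} {g : α → Z} {a : Y} {b : Z}
    (hf : Tendsto f l (𝓝 a)) (hg : Tendsto g l (𝓝 b)) :
    Tendsto (fun i => mk2 (f i) (g i)) l (𝓝 (mk2 a b)) := by
  have h0 := ((WithLp.prodContinuousLinearEquiv 2 ℝ Y Z).symm.continuous.tendsto
    (a, b)).comp (hf.prodMk_nhds hg)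
  exact h0

end Aux


set_option maxHeartbeats 2000000 in
/-- **Key pointwise lemma**: under a local metric subregularity estimate, a Fréchet normal
to the preimage set can be approximated by a coderivative-type pair of Fréchet normals. -/
lemma keyLemma {n m : ℕ} {Q : Set (Euc m)} (hQ : IsClosed Q)
    {φ : Euc n → Euc m} (hφ : Continuous φ) {x₀ : Euc n}
    {ξ : Euc n} (hξ : ξ ∈ frechetNC (φ ⁻¹' Q) x₀)
    {κ : ℝ} (hκ : 0 < κ) {r₂ : ℝ} (hr₂ : 0 < r₂)
    (hsub : ∀ x', ‖x' - x₀‖ ≤ r₂ → Metric.infDist x' (φ ⁻¹' Q) ≤ κ * Metric.infDist (φ x') Q)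
    {ε : ℝ} (hε : 0 < ε) (hε1 : ε ≤ 1) :
    ∃ x' z ξ' η, ‖x' - x₀‖ ≤ ε ∧ z ∈ Q ∧ ‖z - φ x'‖ ≤ ε ∧
      ‖ξ' - ξ‖ ≤ 3 * ε ∧ ‖η‖ ≤ (‖ξ‖ + 1) * κ + 1 ∧
      η ∈ frechetNC Q z ∧ mk2 ξ' (-η) ∈ frechetNC (graphFun φ) (mk2 x' (φ x')) := by
  have hx₀C : x₀ ∈ φ ⁻¹' Q := hξ.1
  have hx₀Q : φ x₀ ∈ Q := hx₀C
  set L : ℝ := (‖ξ‖ + 1) * κ + 1 with hLdef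
  have hL1 : 1 ≤ L := by nlinarith [norm_nonneg ξ]
  have hL0 : (0:ℝ) < L := by linarith
  have hCclosed : IsClosed (φ ⁻¹' Q) := hQ.preimage hφ
  -- Step 1 : Fréchet radius
  obtain ⟨r₁, hr₁, hFre⟩ : ∃ r₁ > 0, ∀ y ∈ φ ⁻¹' Q, dist y x₀ < r₁ →
      (inner ℝ ξ (y - x₀) : ℝ) ≤ ε * ‖y - x₀‖ := by
    have h0 := hξ.2 ε hε
    rw [Filter.eventually_iff, Metric.mem_nhdsWithin_iff] at h0
    obtain ⟨r₁, hr₁, hsubs⟩ := h0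
    exact ⟨r₁, hr₁, fun y hy hdy => hsubs ⟨Metric.mem_ball.mpr hdy, hy⟩⟩
  -- Step 2 : continuity radius
  obtain ⟨r₃, hr₃, hcont⟩ : ∃ r₃ > 0, ∀ x', dist x' x₀ < r₃ → dist (φ x') (φ x₀) < ε/2 := by
    obtain ⟨d, hd, hcd⟩ := Metric.continuousAt_iff.mp hφ.continuousAt (ε/2) (by positivity)
    exact ⟨d, hd, fun x' hx' => hcd hx'⟩
  set r : ℝ := min (min (r₁/4) r₂) (min (r₃/2) ε) with hrdef
  have hr0 : 0 < r := by positivity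
  have hrr₁ : r ≤ r₁/4 := le_trans (min_le_left _ _) (min_le_left _ _)
  have hrr₂ : r ≤ r₂ := le_trans (min_le_left _ _) (min_le_right _ _)
  have hrr₃ : r ≤ r₃/2 := le_trans (min_le_right _ _) (min_le_left _ _)
  have hrε : r ≤ ε := le_trans (min_le_right _ _) (min_le_right _ _)
  -- Step 3 : key penalization inequality
  have keyineq : ∀ x', ‖x' - x₀‖ ≤ r → (inner ℝ ξ (x' - x₀) : ℝ) ≤
      2*ε*‖x' - x₀‖ + (L - ε) * Metric.infDist (φ x') Q := by
    intro x' hx'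
    obtain ⟨cc, hccC, hccd⟩ := hCclosed.exists_infDist_eq_dist ⟨x₀, hx₀C⟩ x'
    have hinf0 : 0 ≤ Metric.infDist (φ x') Q := Metric.infDist_nonneg
    have hdle : Metric.infDist x' (φ ⁻¹' Q) ≤ ‖x' - x₀‖ := by
      calc Metric.infDist x' (φ ⁻¹' Q) ≤ dist x' x₀ := Metric.infDist_le_dist_of_mem hx₀C
        _ = ‖x' - x₀‖ := dist_eq_norm _ _
    have hcx' : dist x' cc ≤ ‖x' - x₀‖ := by rw [← hccd]; exact hdle
    have hccx₀ : dist cc x₀ < r₁ := by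
      calc dist cc x₀ ≤ dist cc x' + dist x' x₀ := dist_triangle _ _ _
        _ = dist x' cc + ‖x' - x₀‖ := by rw [dist_comm cc x', dist_eq_norm x' x₀]
        _ ≤ 2 * r := by linarith
        _ < r₁ := by linarith
    have hF := hFre cc hccC hccx₀
    have hsplit : (inner ℝ ξ (x' - x₀) : ℝ) = inner ℝ ξ (x' - cc) + inner ℝ ξ (cc - x₀) := by
      rw [← inner_add_right]
      congr 1
      abel
    have hCS : (inner ℝ ξ (x' - cc) : ℝ) ≤ ‖ξ‖ * ‖x' - cc‖ := real_inner_le_norm _ _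
    have hxc : ‖x' - cc‖ = dist x' cc := (dist_eq_norm _ _).symm
    have hxcC : ‖x' - cc‖ ≤ κ * Metric.infDist (φ x') Q := by
      rw [hxc, ← hccd]
      exact hsub x' (hx'.trans hrr₂)
    have hccx₀n : ‖cc - x₀‖ ≤ ‖x' - cc‖ + ‖x' - x₀‖ := by
      have h9 : cc - x₀ = -(x' - cc) + (x' - x₀) := by abel
      calc ‖cc - x₀‖ = ‖-(x' - cc) + (x' - x₀)‖ := by rw [← h9]
        _ ≤ ‖-(x' - cc)‖ + ‖x' - x₀‖ := norm_add_le _ _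
        _ = ‖x' - cc‖ + ‖x' - x₀‖ := by rw [norm_neg]
    have h1 : (inner ℝ ξ (x' - x₀) : ℝ) ≤ (‖ξ‖ + ε) * ‖x' - cc‖ + 2 * ε * ‖x' - x₀‖ := by
      rw [hsplit]
      nlinarith [mul_le_mul_of_nonneg_left hccx₀n hε.le, hF, hCS,
        mul_nonneg hε.le (norm_nonneg (x' - x₀))]
    have h3 : (‖ξ‖ + ε) * ‖x' - cc‖ ≤ (‖ξ‖ + ε) * (κ * Metric.infDist (φ x') Q) :=
      mul_le_mul_of_nonneg_left hxcC (by positivity)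
    have h4 : (‖ξ‖ + ε) * κ ≤ L - ε := by
      nlinarith [mul_nonneg (sub_nonneg.mpr hε1) hκ.le, norm_nonneg ξ]
    have h5 : ((‖ξ‖ + ε) * κ) * Metric.infDist (φ x') Q ≤
        (L - ε) * Metric.infDist (φ x') Q := mul_le_mul_of_nonneg_right h4 hinf0
    nlinarith [h1, h3, h5]
  -- Step 4 : smoothing parameter
  set M : ℝ := min r 1 with hMdef
  have hM0 : 0 < M := by positivity
  have hMr : M ≤ r := min_le_left _ _
  have hM1 : M ≤ 1 := min_le_right _ _
  set σ : ℝ := ε * M / (2*(3*ε+L)) with hσdef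
  have hσ0 : 0 < σ := by positivity
  have hσ2 : 0 < σ^2 := by positivity
  have hkey : (3*ε+L)*σ = ε*M/2 := by
    rw [hσdef]
    field_simp
  set θn : Euc n → ℝ := fun u => Real.sqrt (‖u‖^2 + σ^2) with hθndef
  set θm : Euc m → ℝ := fun u => Real.sqrt (‖u‖^2 + σ^2) with hθmdef
  set G : Euc n × Euc m → ℝ :=
    fun p => -(inner ℝ ξ (p.1 - x₀) : ℝ) + 3*ε*θn (p.1 - x₀) + L*θm (φ p.1 - p.2) with hGdef
  set S : Set (Euc n × Euc m) :=
    Metric.closedBall x₀ r ×ˢ (Q ∩ Metric.closedBall (φ x₀) 1) with hSdef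
  have hScomp : IsCompact S :=
    (isCompact_closedBall _ _).prod ((isCompact_closedBall _ _).inter_left hQ)
  have hSne : (x₀, φ x₀) ∈ S :=
    ⟨Metric.mem_closedBall_self hr0.le, hx₀Q, Metric.mem_closedBall_self zero_le_one⟩
  have hGc : Continuous G := by
    apply Continuous.add
    apply Continuous.add
    · exact ((continuous_const.inner (continuous_fst.sub continuous_const))).neg
    · exact continuous_const.mul (Real.continuous_sqrt.comp
        ((((continuous_fst.sub continuous_const).norm.pow 2)).add continuous_const))
    · exact continuous_const.mul (Real.continuous_sqrt.comp
        (((((hφ.comp continuous_fst).sub continuous_snd).norm.pow 2)).add continuous_const))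
  obtain ⟨⟨xs, zs⟩, hpsS, hmin⟩ := hScomp.exists_isMinOn ⟨_, hSne⟩ hGc.continuousOn
  have hθ0 : Real.sqrt (‖(0 : Euc n)‖^2 + σ^2) = σ := by
    rw [norm_zero]
    simpa using Real.sqrt_sq hσ0.le
  have hθ0m : Real.sqrt (‖(0 : Euc m)‖^2 + σ^2) = σ := by
    rw [norm_zero]
    simpa using Real.sqrt_sq hσ0.le
  have hG0 : G (x₀, φ x₀) = (3*ε+L)*σ := by
    simp only [hGdef, hθndef, hθmdef, sub_self, inner_zero_right, hθ0, hθ0m]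
    ring
  have hup : G (xs, zs) ≤ (3*ε+L)*σ := by
    rw [← hG0]
    exact hmin hSne
  -- lower estimate on S
  have hlowS : ∀ p ∈ S, ε*‖p.1 - x₀‖ + ε*‖φ p.1 - p.2‖ ≤ G p := by
    rintro ⟨x1, z1⟩ ⟨hx1, hz1Q, hz1b⟩
    have hx1n : ‖x1 - x₀‖ ≤ r := by
      rw [← dist_eq_norm]
      exact Metric.mem_closedBall.mp hx1
    have hki := keyineq x1 hx1n
    have hinf_le : Metric.infDist (φ x1) Q ≤ ‖φ x1 - z1‖ := by
      calc Metric.infDist (φ x1) Q ≤ dist (φ x1) z1 := Metric.infDist_le_dist_of_mem hz1Q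
        _ = ‖φ x1 - z1‖ := dist_eq_norm _ _
    have ht1 : ‖x1 - x₀‖ ≤ θn (x1 - x₀) := norm_le_theta _ hσ2.le _
    have ht2 : ‖φ x1 - z1‖ ≤ θm (φ x1 - z1) := norm_le_theta _ hσ2.le _
    have ht3 : 3*ε*‖x1 - x₀‖ ≤ 3*ε*θn (x1 - x₀) :=
      mul_le_mul_of_nonneg_left ht1 (by positivity)
    have ht4 : L*‖φ x1 - z1‖ ≤ L*θm (φ x1 - z1) :=
      mul_le_mul_of_nonneg_left ht2 hL0.le
    have ht5 : (L - ε) * Metric.infDist (φ x1) Q ≤ (L - ε) * ‖φ x1 - z1‖ :=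
      mul_le_mul_of_nonneg_left hinf_le (by linarith)
    simp only [hGdef]
    linarith [hki, ht3, ht4, ht5]
  have hxsS := hpsS
  have hbound : ‖xs - x₀‖ + ‖φ xs - zs‖ ≤ M/2 := by
    have h6 := hlowS (xs, zs) hpsS
    have h7 : ε*(‖xs - x₀‖ + ‖φ xs - zs‖) ≤ ε*(M/2) := by
      rw [mul_add]
      calc ε*‖xs - x₀‖ + ε*‖φ xs - zs‖ ≤ G (xs, zs) := h6
        _ ≤ (3*ε+L)*σ := hup
        _ = ε*M/2 := hkey
        _ = ε*(M/2) := by ring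
    exact le_of_mul_le_mul_left h7 hε
  have hasb : ‖xs - x₀‖ ≤ M/2 := by
    have := norm_nonneg (φ xs - zs)
    linarith
  have hbsb : ‖φ xs - zs‖ ≤ M/2 := by
    have := norm_nonneg (xs - x₀)
    linarith
  have hxsr : ‖xs - x₀‖ < r := by
    have : M/2 < r := by linarith
    linarith
  have hxsε : ‖xs - x₀‖ ≤ ε := by
    have : M ≤ ε := hMr.trans hrε
    linarith
  have hzsQ : zs ∈ Q := hpsS.2.1
  have hzsφ : ‖zs - φ xs‖ ≤ ε := by
    rw [norm_sub_rev]
    have : M ≤ ε := hMr.trans hrε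
    linarith
  have hφxsd : dist (φ xs) (φ x₀) < ε/2 := by
    apply hcont
    rw [dist_eq_norm]
    linarith
  have hzsball : dist zs (φ x₀) < 1 := by
    calc dist zs (φ x₀) ≤ dist zs (φ xs) + dist (φ xs) (φ x₀) := dist_triangle _ _ _
      _ < M/2 + ε/2 := by
          rw [dist_eq_norm]
          have : ‖zs - φ xs‖ ≤ M/2 := by rw [norm_sub_rev]; exact hbsb
          linarith
      _ ≤ 1 := by linarith
  -- gradients
  have hθa0 : 0 < θn (xs - x₀) := theta_pos hσ2 _
  have hθb0 : 0 < θm (φ xs - zs) := theta_pos hσ2 _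
  have hθa_ge : ‖xs - x₀‖ ≤ θn (xs - x₀) := norm_le_theta _ hσ2.le _
  have hθb_ge : ‖φ xs - zs‖ ≤ θm (φ xs - zs) := norm_le_theta _ hσ2.le _
  set η : Euc m := (L / θm (φ xs - zs)) • (φ xs - zs) with hηdef
  set ξ' : Euc n := ξ - (3*ε / θn (xs - x₀)) • (xs - x₀) with hξ'def
  have hη_norm : ‖η‖ ≤ L := by
    rw [hηdef, norm_smul, Real.norm_eq_abs, abs_of_nonneg (by positivity)]
    calc L / θm (φ xs - zs) * ‖φ xs - zs‖ ≤ L / θm (φ xs - zs) * θm (φ xs - zs) :=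
        mul_le_mul_of_nonneg_left hθb_ge (by positivity)
      _ = L := div_mul_cancel₀ _ hθb0.ne'
  have hξ'_norm : ‖ξ' - ξ‖ ≤ 3 * ε := by
    have : ξ' - ξ = -((3*ε / θn (xs - x₀)) • (xs - x₀)) := by rw [hξ'def]; abel
    rw [this, norm_neg, norm_smul, Real.norm_eq_abs, abs_of_nonneg (by positivity)]
    calc 3*ε / θn (xs - x₀) * ‖xs - x₀‖ ≤ 3*ε / θn (xs - x₀) * θn (xs - x₀) :=
        mul_le_mul_of_nonneg_left hθa_ge (by positivity)
      _ = 3*ε := div_mul_cancel₀ _ hθa0.ne'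
  -- (1) η is a Fréchet normal to Q at zs
  have hηQ : η ∈ frechetNC Q zs := by
    have hrad : 0 < 1 - dist zs (φ x₀) := by linarith
    have hminz : ∀ᶠ z in 𝓝[Q] zs,
        (fun z => L * θm (φ xs - z)) zs ≤ (fun z => L * θm (φ xs - z)) z := by
      have hball : ∀ᶠ z in 𝓝[Q] zs, dist z zs < 1 - dist zs (φ x₀) := by
        filter_upwards [nhdsWithin_le_nhds (Metric.ball_mem_nhds zs hrad)] with z hz
        exact Metric.mem_ball.mp hz
      filter_upwards [hball, eventually_mem_nhdsWithin] with z hz hzQ'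
      have hzS : (xs, z) ∈ S := by
        refine ⟨hpsS.1, hzQ', ?_⟩
        rw [Metric.mem_closedBall]
        calc dist z (φ x₀) ≤ dist z zs + dist zs (φ x₀) := dist_triangle _ _ _
          _ ≤ 1 := by linarith
      have h8 : G (xs, zs) ≤ G (xs, z) := hmin hzS
      simp only [hGdef] at h8
      show L * θm (φ xs - zs) ≤ L * θm (φ xs - z)
      linarith
    have hd1 : HasFDerivAt (fun z : Euc m => φ xs - z)
        (-(ContinuousLinearMap.id ℝ (Euc m))) zs := by
      simpa using (hasFDerivAt_id zs).const_sub (φ xs)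
    have hd2 : HasFDerivAt (fun z : Euc m => θm (φ xs - z))
        (((θm (φ xs - zs))⁻¹ • innerSL ℝ (φ xs - zs)).comp
          (-(ContinuousLinearMap.id ℝ (Euc m)))) zs :=
      (hasFDerivAt_theta hσ2 (φ xs - zs)).comp zs hd1
    have hd3 := hd2.const_mul L
    have hDz : ∀ v, (L • (((θm (φ xs - zs))⁻¹ • innerSL ℝ (φ xs - zs)).comp
        (-(ContinuousLinearMap.id ℝ (Euc m))))) v = (inner ℝ (-η) v : ℝ) := by
      intro v
      simp only [ContinuousLinearMap.smul_apply, ContinuousLinearMap.coe_comp',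
        Function.comp_apply, ContinuousLinearMap.neg_apply, ContinuousLinearMap.coe_id',
        id_eq, innerSL_apply_apply, smul_eq_mul, hηdef, inner_neg_left, real_inner_smul_left,
        inner_neg_right]
      simp only [div_eq_mul_inv]
      ring
    have hres := neg_grad_mem_frechetNC hzsQ hd3 hDz hminz
    rwa [neg_neg] at hres
  -- (2) graph normal
  have hgraph : mk2 ξ' (-η) ∈ frechetNC (graphFun φ) (mk2 xs (φ xs)) := by
    set e : P2 (Euc n) (Euc m) ≃L[ℝ] Euc n × Euc m :=
      WithLp.prodContinuousLinearEquiv 2 ℝ (Euc n) (Euc m) with hedef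
    set π1 : P2 (Euc n) (Euc m) →L[ℝ] Euc n :=
      (ContinuousLinearMap.fst ℝ (Euc n) (Euc m)).comp e.toContinuousLinearMap with hπ1def
    set π2 : P2 (Euc n) (Euc m) →L[ℝ] Euc m :=
      (ContinuousLinearMap.snd ℝ (Euc n) (Euc m)).comp e.toContinuousLinearMap with hπ2def
    set ψ : P2 (Euc n) (Euc m) → ℝ :=
      fun p => -(inner ℝ ξ (π1 p - x₀) : ℝ) + 3*ε*θn (π1 p - x₀) + L*θm (π2 p - zs) with hψdef
    have hpmem : mk2 xs (φ xs) ∈ graphFun φ := ⟨xs, rfl⟩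
    have hπ1p : π1 (mk2 xs (φ xs)) = xs := rfl
    have hπ2p : π2 (mk2 xs (φ xs)) = φ xs := rfl
    -- derivative
    have hπ1d : HasFDerivAt (fun p : P2 (Euc n) (Euc m) => π1 p - x₀) π1 (mk2 xs (φ xs)) := by
      simpa using (π1.hasFDerivAt (x := mk2 xs (φ xs))).sub_const x₀
    have hπ2d : HasFDerivAt (fun p : P2 (Euc n) (Euc m) => π2 p - zs) π2 (mk2 xs (φ xs)) := by
      simpa using (π2.hasFDerivAt (x := mk2 xs (φ xs))).sub_const zs
    have hA : HasFDerivAt (fun p : P2 (Euc n) (Euc m) => (inner ℝ ξ (π1 p - x₀) : ℝ))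
        ((innerSL ℝ ξ).comp π1) (mk2 xs (φ xs)) := by
      have h10 := ((innerSL ℝ ξ).hasFDerivAt (x := xs - x₀)).comp (mk2 xs (φ xs)) hπ1d
      exact h10
    have hB : HasFDerivAt (fun p : P2 (Euc n) (Euc m) => θn (π1 p - x₀))
        (((θn (xs - x₀))⁻¹ • innerSL ℝ (xs - x₀)).comp π1) (mk2 xs (φ xs)) := by
      have h11 := (hasFDerivAt_theta hσ2 (xs - x₀)).comp (mk2 xs (φ xs)) hπ1d
      exact h11
    have hC : HasFDerivAt (fun p : P2 (Euc n) (Euc m) => θm (π2 p - zs))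
        (((θm (φ xs - zs))⁻¹ • innerSL ℝ (φ xs - zs)).comp π2) (mk2 xs (φ xs)) := by
      have h12 := (hasFDerivAt_theta hσ2 (φ xs - zs)).comp (mk2 xs (φ xs)) hπ2d
      exact h12
    have hDtot : HasFDerivAt ψ
        ((-(innerSL ℝ ξ).comp π1 + (3*ε) • (((θn (xs - x₀))⁻¹ • innerSL ℝ (xs - x₀)).comp π1))
          + L • (((θm (φ xs - zs))⁻¹ • innerSL ℝ (φ xs - zs)).comp π2)) (mk2 xs (φ xs)) :=
      ((hA.neg).add (hB.const_mul (3*ε))).add (hC.const_mul L)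
    have hDg : ∀ q, ((-(innerSL ℝ ξ).comp π1
        + (3*ε) • (((θn (xs - x₀))⁻¹ • innerSL ℝ (xs - x₀)).comp π1))
          + L • (((θm (φ xs - zs))⁻¹ • innerSL ℝ (φ xs - zs)).comp π2)) q
        = (inner ℝ (mk2 (-ξ') η) q : ℝ) := by
      intro q
      have hq1 : π1 q = q.fst := rfl
      have hq2 : π2 q = q.snd := rfl
      rw [WithLp.prod_inner_apply]
      simp only [WithLp.ofLp_fst, WithLp.ofLp_snd]
      simp only [ContinuousLinearMap.add_apply, ContinuousLinearMap.neg_apply,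
        ContinuousLinearMap.smul_apply, ContinuousLinearMap.coe_comp', Function.comp_apply,
        innerSL_apply_apply, smul_eq_mul, hq1, hq2]
      have hfst : (mk2 (-ξ') η : P2 (Euc n) (Euc m)).fst = -ξ' := rfl
      have hsnd : (mk2 (-ξ') η : P2 (Euc n) (Euc m)).snd = η := rfl
      rw [hfst, hsnd, hξ'def, hηdef]
      simp only [inner_neg_left, inner_sub_left, real_inner_smul_left]
      simp only [div_eq_mul_inv]
      ring
    have hminψ : ∀ᶠ q in 𝓝[graphFun φ] (mk2 xs (φ xs)), ψ (mk2 xs (φ xs)) ≤ ψ q := by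
      have hrad2 : 0 < r - ‖xs - x₀‖ := by linarith
      have htend : Tendsto (fun q : P2 (Euc n) (Euc m) => π1 q)
          (𝓝 (mk2 xs (φ xs))) (𝓝 xs) := π1.continuous.tendsto _
      have hball2 : ∀ᶠ q in 𝓝[graphFun φ] (mk2 xs (φ xs)),
          dist (π1 q) xs < r - ‖xs - x₀‖ := by
        filter_upwards [nhdsWithin_le_nhds
          (htend (Metric.ball_mem_nhds xs hrad2))] with q hq
        exact Metric.mem_ball.mp hq
      filter_upwards [hball2, eventually_mem_nhdsWithin] with q hq hqg
      obtain ⟨x1, rfl⟩ := hqg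
      have hx1π : π1 (mk2 x1 (φ x1)) = x1 := rfl
      rw [hx1π] at hq
      have hx1r : ‖x1 - x₀‖ ≤ r := by
        have h13 : ‖x1 - xs‖ < r - ‖xs - x₀‖ := by rwa [← dist_eq_norm]
        calc ‖x1 - x₀‖ = ‖(x1 - xs) + (xs - x₀)‖ := by congr 1; abel
          _ ≤ ‖x1 - xs‖ + ‖xs - x₀‖ := norm_add_le _ _
          _ ≤ r := by linarith
      have hx1S : (x1, zs) ∈ S := by
        refine ⟨?_, hpsS.2⟩
        rw [Metric.mem_closedBall, dist_eq_norm]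
        exact hx1r
      have h14 : G (xs, zs) ≤ G (x1, zs) := hmin hx1S
      have h15 : ψ (mk2 xs (φ xs)) = G (xs, zs) := rfl
      have h16 : ψ (mk2 x1 (φ x1)) = G (x1, zs) := rfl
      rw [h15, h16]
      exact h14
    have hres := neg_grad_mem_frechetNC hpmem hDtot hDg hminψ
    have hneg : -(mk2 (-ξ') η : P2 (Euc n) (Euc m)) = mk2 (-(-ξ')) (-η) := rfl
    rw [hneg, neg_neg] at hres
    exact hres
  exact ⟨xs, zs, ξ', η, hxsε, hzsQ, hzsφ, hξ'_norm, hη_norm, hηQ, hgraph⟩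

set_option maxHeartbeats 2000000 in
/-- **Theorem 3.1 (pre-image sets), sharper estimate under calmness.** -/
theorem dirNC_preimage_of_calm {n m : ℕ} (Q : Set (Euc m)) (hQ : IsClosed Q)
    (φ : Euc n → Euc m) (hφ : Continuous φ) (x : Euc n) (hx : φ x ∈ Q) (h : Euc n)
    (hsub : DirMetrSubreg (fun x' => {y : Euc m | φ x' + y ∈ Q}) x 0 h)
    (hcalm : DirCalm φ x h) :
    dirNC (φ ⁻¹' Q) x h ⊆
      ⋃ v ∈ gderiv φ x h ∩ tangentCone Q (φ x),
        ⋃ η ∈ dirNC Q (φ x) v, dirCoderiv φ x h v η := by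
  intro ξ hξmem
  obtain ⟨t, hk, ξk, htpos, ht0, hhk, hξk, hFk⟩ := hξmem
  obtain ⟨κ, hκ, V, hVnb, hsubV⟩ := hsub
  obtain ⟨ρ, hρ, δ, hδ, hVsub⟩ := hVnb
  obtain ⟨κ₂, hκ₂, V₂, hVnb₂, hcalmV⟩ := hcalm
  obtain ⟨ρ₂, hρ₂, δ₂, hδ₂, hVsub₂⟩ := hVnb₂
  obtain ⟨c, hc, hcmem⟩ := exists_entry_const (h := h) (ρ := ρ) hδ
  obtain ⟨c₂, hc₂, hc₂mem⟩ := exists_entry_const (h := h) (ρ := ρ₂) hδ₂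
  -- eventually good indices
  have hev : ∀ᶠ k in atTop, ‖hk k - h‖ ≤ c/4 ∧ ‖hk k - h‖ ≤ c₂/2 ∧ t k ≤ 1 ∧
      t k * (‖h‖ + c) ≤ ρ ∧ t k * (‖h‖ + c₂) ≤ ρ₂ ∧ ‖ξk k‖ ≤ ‖ξ‖ + 1 ∧
      (1:ℝ)/(k+1) ≤ c/4 ∧ (1:ℝ)/(k+1) ≤ c₂/2 := by
    have e1 : ∀ᶠ k in atTop, ‖hk k - h‖ ≤ c/4 := by
      filter_upwards [hhk.eventually_mem
        (Metric.closedBall_mem_nhds h (show (0:ℝ) < c/4 by positivity))] with k hk'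
      rw [← dist_eq_norm]
      exact Metric.mem_closedBall.mp hk'
    have e2 : ∀ᶠ k in atTop, ‖hk k - h‖ ≤ c₂/2 := by
      filter_upwards [hhk.eventually_mem
        (Metric.closedBall_mem_nhds h (show (0:ℝ) < c₂/2 by positivity))] with k hk'
      rw [← dist_eq_norm]
      exact Metric.mem_closedBall.mp hk'
    have e3 : ∀ᶠ k in atTop, t k ≤ 1 ∧ t k * (‖h‖ + c) ≤ ρ ∧ t k * (‖h‖ + c₂) ≤ ρ₂ := by
      have hB : (0:ℝ) < min 1 (min (ρ/(‖h‖+c)) (ρ₂/(‖h‖+c₂))) := by positivity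
      filter_upwards [ht0.eventually_mem (Metric.closedBall_mem_nhds 0 hB)] with k hk'
      have habs : |t k| ≤ min 1 (min (ρ/(‖h‖+c)) (ρ₂/(‖h‖+c₂))) := by
        simpa [Real.dist_eq] using Metric.mem_closedBall.mp hk'
      have h1 : t k ≤ min 1 (min (ρ/(‖h‖+c)) (ρ₂/(‖h‖+c₂))) := (le_abs_self _).trans habs
      refine ⟨h1.trans (min_le_left _ _), ?_, ?_⟩
      · have h2 : t k ≤ ρ/(‖h‖+c) := h1.trans ((min_le_right _ _).trans (min_le_left _ _))
        exact (le_div_iff₀ (by positivity)).mp h2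
      · have h2 : t k ≤ ρ₂/(‖h‖+c₂) := h1.trans ((min_le_right _ _).trans (min_le_right _ _))
        exact (le_div_iff₀ (by positivity)).mp h2
    have e6 : ∀ᶠ k in atTop, ‖ξk k‖ ≤ ‖ξ‖ + 1 := by
      filter_upwards [hξk.eventually_mem (Metric.closedBall_mem_nhds ξ one_pos)] with k hk'
      have hd : ‖ξk k - ξ‖ ≤ 1 := by
        rw [← dist_eq_norm]
        exact Metric.mem_closedBall.mp hk'
      calc ‖ξk k‖ = ‖(ξk k - ξ) + ξ‖ := by congr 1; abel
        _ ≤ ‖ξk k - ξ‖ + ‖ξ‖ := norm_add_le _ _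
        _ ≤ ‖ξ‖ + 1 := by linarith
    have e7 : ∀ᶠ k : ℕ in atTop, (1:ℝ)/(k+1) ≤ c/4 := by
      filter_upwards [tendsto_one_div_add_atTop_nhds_zero_nat.eventually_mem
        (Metric.closedBall_mem_nhds (0:ℝ) (show (0:ℝ) < c/4 by positivity))] with k hk'
      have := Metric.mem_closedBall.mp hk'
      rw [Real.dist_eq, sub_zero, abs_of_nonneg (by positivity)] at this
      exact this
    have e8 : ∀ᶠ k : ℕ in atTop, (1:ℝ)/(k+1) ≤ c₂/2 := by
      filter_upwards [tendsto_one_div_add_atTop_nhds_zero_nat.eventually_mem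
        (Metric.closedBall_mem_nhds (0:ℝ) (show (0:ℝ) < c₂/2 by positivity))] with k hk'
      have := Metric.mem_closedBall.mp hk'
      rw [Real.dist_eq, sub_zero, abs_of_nonneg (by positivity)] at this
      exact this
    filter_upwards [e1, e2, e3, e6, e7, e8] with k g1 g2 g3 g6 g7 g8
    exact ⟨g1, g2, g3.1, g3.2.1, g3.2.2, g6, g7, g8⟩
  obtain ⟨N, hN⟩ := Filter.eventually_atTop.mp hev
  -- apply the key lemma along the sequence
  have hkeyall : ∀ j : ℕ, ∃ x' z ξ' η,
      ‖x' - (x + t (j+N) • hk (j+N))‖ ≤ t (j+N) / ((j+N : ℕ) + 1) ∧ z ∈ Q ∧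
      ‖z - φ x'‖ ≤ t (j+N) / ((j+N : ℕ) + 1) ∧
      ‖ξ' - ξk (j+N)‖ ≤ 3 * (t (j+N) / ((j+N : ℕ) + 1)) ∧
      ‖η‖ ≤ (‖ξk (j+N)‖ + 1) * κ + 1 ∧ η ∈ frechetNC Q z ∧
      mk2 ξ' (-η) ∈ frechetNC (graphFun φ) (mk2 x' (φ x')) := by
    intro j
    obtain ⟨g1, g2, g3, g4, g5, g6, g7, g8⟩ := hN (j+N) (Nat.le_add_left N j)
    have htj := htpos (j+N)
    have hden : (0:ℝ) < ((j+N : ℕ) : ℝ) + 1 := by positivity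
    refine keyLemma hQ hφ (hFk (j+N)) hκ
      (show (0:ℝ) < c * t (j+N) / 4 by positivity) ?_ (by positivity) ?_
    · -- local subregularity estimate
      intro x' hx'
      have hmemB : (x' - x) ∈ dirNbhdBase h ρ δ := by
        apply hcmem (t (j+N)) htj
        · have hsplit : x' - x - t (j+N) • h =
              (x' - (x + t (j+N) • hk (j+N))) + t (j+N) • (hk (j+N) - h) := by
            rw [smul_sub]
            abel
          rw [hsplit]
          calc ‖(x' - (x + t (j+N) • hk (j+N))) + t (j+N) • (hk (j+N) - h)‖
              ≤ ‖x' - (x + t (j+N) • hk (j+N))‖ + ‖t (j+N) • (hk (j+N) - h)‖ :=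
                norm_add_le _ _
            _ ≤ c * t (j+N) / 4 + t (j+N) * (c/4) := by
                have hsm : ‖t (j+N) • (hk (j+N) - h)‖ = t (j+N) * ‖hk (j+N) - h‖ := by
                  rw [norm_smul, Real.norm_eq_abs, abs_of_pos htj]
                rw [hsm]
                have := mul_le_mul_of_nonneg_left g1 htj.le
                linarith [hx']
            _ ≤ c * t (j+N) := by nlinarith
        · exact g4
      have h20 := hsubV x' (hVsub hmemB)
      have hset : {z : Euc n | (0:Euc m) ∈ {y : Euc m | φ z + y ∈ Q}} = φ ⁻¹' Q := by
        ext w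
        simp
      rw [hset, infDist_zero_shift] at h20
      exact h20
    · -- ε ≤ 1
      calc t (j+N) / (((j+N : ℕ) : ℝ) + 1) ≤ t (j+N) := by
            apply div_le_self htj.le
            have : (0:ℝ) ≤ ((j+N : ℕ) : ℝ) := Nat.cast_nonneg _
            linarith
        _ ≤ 1 := g3
  choose xA zA ξB ηA hA1 hA2 hA3 hA4 hA5 hA6 hA7 using hkeyall
  -- the rescaled sequences
  set hs : ℕ → Euc n := fun j => (t (j+N))⁻¹ • (xA j - x) with hhsdef
  set vs : ℕ → Euc m := fun j => (t (j+N))⁻¹ • (φ (xA j) - φ x) with hvsdef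
  set ws : ℕ → Euc m := fun j => (t (j+N))⁻¹ • (zA j - φ x) with hwsdef
  have htj : ∀ j, 0 < t (j+N) := fun j => htpos (j+N)
  have idx : ∀ j, x + t (j+N) • hs j = xA j := by
    intro j
    rw [hhsdef]
    simp only []
    rw [smul_inv_smul₀ (htj j).ne']
    abel
  have idv : ∀ j, φ x + t (j+N) • vs j = φ (xA j) := by
    intro j
    rw [hvsdef]
    simp only []
    rw [smul_inv_smul₀ (htj j).ne']
    abel
  have idw : ∀ j, φ x + t (j+N) • ws j = zA j := by
    intro j
    rw [hwsdef]
    simp only []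
    rw [smul_inv_smul₀ (htj j).ne']
    abel
  have hGood : ∀ j : ℕ, ‖hk (j+N) - h‖ ≤ c/4 ∧ ‖hk (j+N) - h‖ ≤ c₂/2 ∧ t (j+N) ≤ 1 ∧
      t (j+N) * (‖h‖ + c) ≤ ρ ∧ t (j+N) * (‖h‖ + c₂) ≤ ρ₂ ∧ ‖ξk (j+N)‖ ≤ ‖ξ‖ + 1 ∧
      (1:ℝ)/((j+N : ℕ)+1) ≤ c/4 ∧ (1:ℝ)/((j+N : ℕ)+1) ≤ c₂/2 :=
    fun j => hN (j+N) (Nat.le_add_left N j)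
  -- norm bounds
  have hhs_close : ∀ j, ‖hs j - hk (j+N)‖ ≤ 1/((j+N : ℕ)+1) := by
    intro j
    have e0 : hs j - hk (j+N) = (t (j+N))⁻¹ • (xA j - (x + t (j+N) • hk (j+N))) := by
      rw [show xA j - (x + t (j+N) • hk (j+N)) = (xA j - x) - t (j+N) • hk (j+N) by abel,
        smul_sub, inv_smul_smul₀ (htj j).ne', hhsdef]
    rw [e0, norm_smul, Real.norm_eq_abs, abs_of_pos (inv_pos.mpr (htj j))]
    have h21 := hA1 j
    have h22 : (t (j+N))⁻¹ * ‖xA j - (x + t (j+N) • hk (j+N))‖ ≤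
        (t (j+N))⁻¹ * (t (j+N) / ((j+N : ℕ) + 1)) :=
      mul_le_mul_of_nonneg_left h21 (inv_pos.mpr (htj j)).le
    calc (t (j+N))⁻¹ * ‖xA j - (x + t (j+N) • hk (j+N))‖
        ≤ (t (j+N))⁻¹ * (t (j+N) / ((j+N : ℕ) + 1)) := h22
      _ = 1/((j+N : ℕ)+1) := by
          field_simp [(htj j).ne']
  have hcalmj : ∀ j, ‖φ (xA j) - φ x‖ ≤ κ₂ * (t (j+N) * (‖h‖ + c₂)) := by
    intro j
    obtain ⟨g1, g2, g3, g4, g5, g6, g7, g8⟩ := hGood j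
    have hclose : ‖(xA j - x) - t (j+N) • h‖ ≤ c₂ * t (j+N) := by
      have hsplit : xA j - x - t (j+N) • h =
          (xA j - (x + t (j+N) • hk (j+N))) + t (j+N) • (hk (j+N) - h) := by
        rw [smul_sub]
        abel
      rw [hsplit]
      calc ‖(xA j - (x + t (j+N) • hk (j+N))) + t (j+N) • (hk (j+N) - h)‖
          ≤ ‖xA j - (x + t (j+N) • hk (j+N))‖ + ‖t (j+N) • (hk (j+N) - h)‖ := norm_add_le _ _
        _ ≤ t (j+N) / ((j+N : ℕ) + 1) + t (j+N) * (c₂/2) := by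
            have hsm : ‖t (j+N) • (hk (j+N) - h)‖ = t (j+N) * ‖hk (j+N) - h‖ := by
              rw [norm_smul, Real.norm_eq_abs, abs_of_pos (htj j)]
            rw [hsm]
            have := mul_le_mul_of_nonneg_left g2 (htj j).le
            linarith [hA1 j]
        _ ≤ c₂ * t (j+N) := by
            have hq : t (j+N) / ((j+N : ℕ) + 1) = t (j+N) * (1/((j+N : ℕ)+1)) := by ring
            rw [hq]
            have h23 := mul_le_mul_of_nonneg_left g8 (htj j).le
            nlinarith
    have hmemB : (xA j - x) ∈ dirNbhdBase h ρ₂ δ₂ := by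
      apply hc₂mem (t (j+N)) (htj j) _ hclose g5
    have h24 := hcalmV (xA j) (hVsub₂ hmemB)
    have h25 : ‖xA j - x‖ ≤ t (j+N) * (‖h‖ + c₂) := by
      calc ‖xA j - x‖ = ‖t (j+N) • h + ((xA j - x) - t (j+N) • h)‖ := by congr 1; abel
        _ ≤ ‖t (j+N) • h‖ + ‖(xA j - x) - t (j+N) • h‖ := norm_add_le _ _
        _ ≤ t (j+N) * ‖h‖ + c₂ * t (j+N) := by
            rw [norm_smul, Real.norm_eq_abs, abs_of_pos (htj j)]
            linarith
        _ = t (j+N) * (‖h‖ + c₂) := by ring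
    calc ‖φ (xA j) - φ x‖ ≤ κ₂ * ‖xA j - x‖ := h24
      _ ≤ κ₂ * (t (j+N) * (‖h‖ + c₂)) := mul_le_mul_of_nonneg_left h25 hκ₂.le
  have hvs_bound : ∀ j, ‖vs j‖ ≤ κ₂ * (‖h‖ + c₂) := by
    intro j
    rw [hvsdef]
    simp only []
    rw [norm_smul, Real.norm_eq_abs, abs_of_pos (inv_pos.mpr (htj j))]
    have h26 := mul_le_mul_of_nonneg_left (hcalmj j) (inv_pos.mpr (htj j)).le
    calc (t (j+N))⁻¹ * ‖φ (xA j) - φ x‖ ≤ (t (j+N))⁻¹ * (κ₂ * (t (j+N) * (‖h‖ + c₂))) := h26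
      _ = κ₂ * (‖h‖ + c₂) := by field_simp [(htj j).ne']
  have hws_vs : ∀ j, ‖ws j - vs j‖ ≤ 1/((j+N : ℕ)+1) := by
    intro j
    have e0 : ws j - vs j = (t (j+N))⁻¹ • (zA j - φ (xA j)) := by
      rw [hwsdef, hvsdef]
      simp only []
      rw [← smul_sub]
      congr 1
      abel
    rw [e0, norm_smul, Real.norm_eq_abs, abs_of_pos (inv_pos.mpr (htj j))]
    have h27 := mul_le_mul_of_nonneg_left (hA3 j) (inv_pos.mpr (htj j)).le
    calc (t (j+N))⁻¹ * ‖zA j - φ (xA j)‖ ≤ (t (j+N))⁻¹ * (t (j+N) / ((j+N : ℕ) + 1)) := h27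
      _ = 1/((j+N : ℕ)+1) := by field_simp [(htj j).ne']
  have hws_bound : ∀ j, ‖ws j‖ ≤ κ₂ * (‖h‖ + c₂) + 1 := by
    intro j
    have hone : (1:ℝ)/((j+N : ℕ)+1) ≤ 1 := by
      rw [div_le_one (by positivity)]
      have : (0:ℝ) ≤ ((j+N : ℕ) : ℝ) := Nat.cast_nonneg _
      linarith
    calc ‖ws j‖ = ‖vs j + (ws j - vs j)‖ := by congr 1; abel
      _ ≤ ‖vs j‖ + ‖ws j - vs j‖ := norm_add_le _ _
      _ ≤ κ₂ * (‖h‖ + c₂) + 1 := by linarith [hvs_bound j, hws_vs j, hone]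
  have hη_bound : ∀ j, ‖ηA j‖ ≤ (‖ξ‖ + 2) * κ + 1 := by
    intro j
    obtain ⟨g1, g2, g3, g4, g5, g6, g7, g8⟩ := hGood j
    calc ‖ηA j‖ ≤ (‖ξk (j+N)‖ + 1) * κ + 1 := hA5 j
      _ ≤ (‖ξ‖ + 2) * κ + 1 := by nlinarith
  -- limits
  have htA : Tendsto (fun j => t (j+N)) atTop (𝓝 0) := ht0.comp (tendsto_add_atTop_nat N)
  have hhkA : Tendsto (fun j => hk (j+N)) atTop (𝓝 h) := hhk.comp (tendsto_add_atTop_nat N)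
  have hξkA : Tendsto (fun j => ξk (j+N)) atTop (𝓝 ξ) := hξk.comp (tendsto_add_atTop_nat N)
  have hinv : Tendsto (fun j : ℕ => (1:ℝ)/((j+N : ℕ)+1)) atTop (𝓝 0) := by
    apply squeeze_zero (fun j => by positivity) (fun j => ?_)
      tendsto_one_div_add_atTop_nhds_zero_nat
    apply one_div_le_one_div_of_le (by positivity)
    have : ((j:ℝ)) ≤ ((j+N : ℕ) : ℝ) := by
      push_cast
      linarith [Nat.cast_nonneg (α := ℝ) N]
    linarith
  have hhkA_norm : Tendsto (fun j => ‖hk (j+N) - h‖) atTop (𝓝 0) :=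
    tendsto_iff_norm_sub_tendsto_zero.mp hhkA
  have hξkA_norm : Tendsto (fun j => ‖ξk (j+N) - ξ‖) atTop (𝓝 0) :=
    tendsto_iff_norm_sub_tendsto_zero.mp hξkA
  have hhs_tend : Tendsto hs atTop (𝓝 h) := by
    rw [← tendsto_sub_nhds_zero_iff]
    apply squeeze_zero_norm (a := fun j => 1/((j+N : ℕ)+1) + ‖hk (j+N) - h‖)
      (fun j => ?_) (by simpa using hinv.add hhkA_norm)
    calc ‖hs j - h‖ = ‖(hs j - hk (j+N)) + (hk (j+N) - h)‖ := by congr 1; abel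
      _ ≤ ‖hs j - hk (j+N)‖ + ‖hk (j+N) - h‖ := norm_add_le _ _
      _ ≤ 1/((j+N : ℕ)+1) + ‖hk (j+N) - h‖ := by linarith [hhs_close j]
  have hξB_tend : Tendsto ξB atTop (𝓝 ξ) := by
    rw [← tendsto_sub_nhds_zero_iff]
    apply squeeze_zero_norm (a := fun j => 3 * t (j+N) + ‖ξk (j+N) - ξ‖)
      (fun j => ?_) (by simpa using (htA.const_mul 3).add hξkA_norm)
    have hone : t (j+N) / (((j+N : ℕ) : ℝ)+1) ≤ t (j+N) := by
      apply div_le_self (htj j).le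
      have : (0:ℝ) ≤ ((j+N : ℕ) : ℝ) := Nat.cast_nonneg _
      linarith
    calc ‖ξB j - ξ‖ = ‖(ξB j - ξk (j+N)) + (ξk (j+N) - ξ)‖ := by congr 1; abel
      _ ≤ ‖ξB j - ξk (j+N)‖ + ‖ξk (j+N) - ξ‖ := norm_add_le _ _
      _ ≤ 3 * t (j+N) + ‖ξk (j+N) - ξ‖ := by linarith [hA4 j]
  -- extract a convergent subsequence of the pair (ws, ηA)
  have hbdd : Bornology.IsBounded
      ((Metric.closedBall (0 : Euc m) (κ₂ * (‖h‖ + c₂) + 1)) ×ˢ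
        (Metric.closedBall (0 : Euc m) ((‖ξ‖ + 2) * κ + 1))) :=
    Metric.isBounded_closedBall.prod Metric.isBounded_closedBall
  have hmempair : ∀ j, (ws j, ηA j) ∈
      ((Metric.closedBall (0 : Euc m) (κ₂ * (‖h‖ + c₂) + 1)) ×ˢ
        (Metric.closedBall (0 : Euc m) ((‖ξ‖ + 2) * κ + 1))) := by
    intro j
    constructor
    · rw [Metric.mem_closedBall, dist_zero_right]
      exact hws_bound j
    · rw [Metric.mem_closedBall, dist_zero_right]
      exact hη_bound j
  obtain ⟨⟨v, ηl⟩, -, K, hKmono, hKt⟩ := tendsto_subseq_of_bounded hbdd hmempair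
  have hKtop : Tendsto K atTop atTop := hKmono.tendsto_atTop
  have hw_tend : Tendsto (fun i => ws (K i)) atTop (𝓝 v) :=
    (continuous_fst.tendsto (v, ηl)).comp hKt
  have hη_tend : Tendsto (fun i => ηA (K i)) atTop (𝓝 ηl) :=
    (continuous_snd.tendsto (v, ηl)).comp hKt
  have hv_tend : Tendsto (fun i => vs (K i)) atTop (𝓝 v) := by
    have hdiff : Tendsto (fun i => vs (K i) - ws (K i)) atTop (𝓝 0) := by
      apply squeeze_zero_norm (a := fun i => 1/((K i + N : ℕ)+1))
        (fun i => le_trans (le_of_eq (norm_sub_rev _ _)) (hws_vs (K i))) ?_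
      · apply squeeze_zero (fun i => by positivity) (fun i => ?_)
          tendsto_one_div_add_atTop_nhds_zero_nat
        apply one_div_le_one_div_of_le (by positivity)
        have h30 : (i:ℝ) ≤ ((K i + N : ℕ) : ℝ) := by
          push_cast
          have h32 : i ≤ K i := hKmono.le_apply
          have h31 : (i:ℝ) ≤ (K i : ℝ) := by exact_mod_cast h32
          linarith [Nat.cast_nonneg (α := ℝ) N]
        linarith
    have := hdiff.add hw_tend
    simp only [sub_add_cancel, zero_add] at this
    exact this
  have hξBK : Tendsto (fun i => ξB (K i)) atTop (𝓝 ξ) := hξB_tend.comp hKtop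
  have hhsK : Tendsto (fun i => hs (K i)) atTop (𝓝 h) := hhs_tend.comp hKtop
  have htK : Tendsto (fun i => t (K i + N)) atTop (𝓝 0) := htA.comp hKtop
  have htKpos : ∀ i, 0 < t (K i + N) := fun i => htj (K i)
  -- graph identity
  have idg : ∀ j, mk2 x (φ x) + t (j+N) • mk2 (hs j) (vs j) = mk2 (xA j) (φ (xA j)) := by
    intro j
    have e0 : mk2 x (φ x) + t (j+N) • mk2 (hs j) (vs j)
        = mk2 (x + t (j+N) • hs j) (φ x + t (j+N) • vs j) := rfl
    rw [e0, idx j, idv j]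
  -- membership in the union
  have hvg : v ∈ gderiv φ x h := by
    refine ⟨fun i => mk2 (hs (K i)) (vs (K i)), fun i => t (K i + N),
      tendsto_mk2 hhsK hv_tend, htKpos, htK, fun i => ?_⟩
    rw [idg (K i)]
    exact ⟨xA (K i), rfl⟩
  have hvt : v ∈ tangentCone Q (φ x) := by
    refine ⟨fun i => ws (K i), fun i => t (K i + N), hw_tend, htKpos, htK, fun i => ?_⟩
    rw [idw (K i)]
    exact hA2 (K i)
  have hηd : ηl ∈ dirNC Q (φ x) v := by
    refine ⟨fun i => t (K i + N), fun i => ws (K i), fun i => ηA (K i),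
      htKpos, htK, hw_tend, hη_tend, fun i => ?_⟩
    rw [idw (K i)]
    exact hA6 (K i)
  have hco : ξ ∈ dirCoderiv φ x h v ηl := by
    refine ⟨fun i => t (K i + N), fun i => mk2 (hs (K i)) (vs (K i)),
      fun i => mk2 (ξB (K i)) (-ηA (K i)), htKpos, htK, tendsto_mk2 hhsK hv_tend,
      tendsto_mk2 hξBK hη_tend.neg, fun i => ?_⟩
    rw [idg (K i)]
    exact hA7 (K i)
  refine Set.mem_iUnion₂.mpr ⟨v, ⟨hvg, hvt⟩, Set.mem_iUnion₂.mpr ⟨ηl, hηd, hco⟩⟩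

end Paper
end
end

section
/- Let C_i ⊂ ℝⁿ, i = 1,…,l, be closed, C = ⋃_{i=1}^l C_i, x̄ ∈ C and h ∈ ℝⁿ. Denote I(x̄, h) := {i : x̄ ∈ C_i and h ∈ T_{C_i}(x̄)}. Then N_C(x̄; h) ⊂ ⋃_{i ∈ I(x̄, h)} N_{C_i}(x̄; h). -/
open Filter Topology Set Pointwise

noncomputable section

namespace Paper

variable {E : Type*} [NormedAddCommGroup E] [InnerProductSpace ℝ E]
variable {F : Type*} [NormedAddCommGroup F] [InnerProductSpace ℝ F]

/-- **Proposition 3.1 (unions).** -/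
theorem dirNC_iUnion_subset {n l : ℕ} (C : Fin l → Set (Euc n)) (hC : ∀ i, IsClosed (C i))
    (x h : Euc n) (hx : x ∈ ⋃ i, C i) :
    dirNC (⋃ i, C i) x h ⊆
      ⋃ i ∈ {i : Fin l | x ∈ C i ∧ h ∈ tangentCone (C i) x}, dirNC (C i) x h := by
  rintro ξ ⟨tk, uk, ξk, htpos, ht0, hu, hξ, hmem⟩
  have hchoice : ∀ k, ∃ i, x + tk k • uk k ∈ C i := fun k =>
    Set.mem_iUnion.mp (hmem k).1
  choose f hf using hchoice
  obtain ⟨i, hi⟩ := Finite.exists_infinite_fiber f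
  have hSinf : {n | f n = i}.Infinite := by
    have := Set.infinite_coe_iff.mp hi
    simpa [Set.preimage, Set.mem_singleton_iff] using this
  set K := Nat.nth (fun n => f n = i) with hK
  have hKmono : StrictMono K := Nat.nth_strictMono hSinf
  have hKtop : Tendsto K atTop atTop := hKmono.tendsto_atTop
  have hKmem : ∀ k, f (K k) = i := fun k => Nat.nth_mem_of_infinite hSinf k
  have hCi : ∀ k, x + tk (K k) • uk (K k) ∈ C i := fun k => (hKmem k) ▸ hf (K k)
  have ht0' : Tendsto (fun k => tk (K k)) atTop (𝓝 0) := ht0.comp hKtop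
  have hu' : Tendsto (fun k => uk (K k)) atTop (𝓝 h) := hu.comp hKtop
  have hxlim : Tendsto (fun k => x + tk (K k) • uk (K k)) atTop (𝓝 x) := by
    have : Tendsto (fun k => x + tk (K k) • uk (K k)) atTop (𝓝 (x + (0:ℝ) • h)) :=
      tendsto_const_nhds.add (ht0'.smul hu')
    simpa using this
  have hxCi : x ∈ C i := (hC i).mem_of_tendsto hxlim (Filter.Eventually.of_forall hCi)
  have htang : h ∈ tangentCone (C i) x :=
    ⟨fun k => uk (K k), fun k => tk (K k), hu', fun k => htpos (K k), ht0', hCi⟩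
  refine Set.mem_iUnion₂.mpr ⟨i, ⟨hxCi, htang⟩, ?_⟩
  refine ⟨fun k => tk (K k), fun k => uk (K k), fun k => ξk (K k),
    fun k => htpos (K k), ht0', hu', hξ.comp hKtop, fun k => ?_⟩
  obtain ⟨-, hfr⟩ := hmem (K k)
  exact ⟨hCi k, fun ε hε => (hfr ε hε).filter_mono
    (nhdsWithin_mono _ (Set.subset_iUnion C i))⟩

end Paper
end
end

section
/- Let f : ℝⁿ → ℝ ∪ {±∞} be lower semicontinuous and finite at x̄, and let h ∈ ℝⁿ. Then ∂_a f(x̄; h) = {x* : (x*, −1) ∈ ⋃_{ν ∈ Df(x̄)(h)} N_{epi f}((x̄, f(x̄)); (h, ν)) ∪ N_{epi f}((x̄, f(x̄)); (h, +∞)) ∪ N_{epi f}((x̄, f(x̄)); (h, −∞))}. -/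
open Filter Topology Set Pointwise

noncomputable section

namespace Paper

variable {E : Type*} [NormedAddCommGroup E] [InnerProductSpace ℝ E]
variable {F : Type*} [NormedAddCommGroup F] [InnerProductSpace ℝ F]

set_option linter.unusedSectionVars false

lemma mk2_fst (x : E) (y : ℝ) : (mk2 x y).fst = x := rfl

lemma mk2_snd (x : E) (y : ℝ) : (mk2 x y).snd = y := rfl

lemma mk2_eta (p : P2 E ℝ) : mk2 p.fst p.snd = p := rfl

lemma mk2_add_smul (x : E) (a t : ℝ) (p : P2 E ℝ) :
    mk2 x a + t • p = mk2 (x + t • p.fst) (a + t * p.snd) := rfl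

lemma mk2_sub (x z : E) (a c : ℝ) : mk2 x a - mk2 z c = mk2 (x - z) (a - c) := rfl

lemma inner_mk2 (x z : E) (a c : ℝ) :
    (inner ℝ (mk2 x a) (mk2 z c) : ℝ) = inner ℝ x z + a * c := by
  simp [mk2, WithLp.prod_inner_apply, RCLike.inner_apply, mul_comm]

lemma norm_mk2_sq (x : E) (a : ℝ) : ‖mk2 x a‖ ^ 2 = ‖x‖ ^ 2 + a ^ 2 := by
  simpa [mk2] using WithLp.prod_norm_sq_eq_of_L2 (mk2 x a)

lemma norm_fst_le (x : E) (a : ℝ) : ‖x‖ ≤ ‖mk2 x a‖ := by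
  have h := norm_mk2_sq x a
  nlinarith [norm_nonneg (mk2 x a), norm_nonneg x, sq_nonneg a]

lemma abs_snd_le (x : E) (a : ℝ) : |a| ≤ ‖mk2 x a‖ := by
  have h := norm_mk2_sq x a
  nlinarith [norm_nonneg (mk2 x a), norm_nonneg x, abs_nonneg a, sq_abs a]

lemma norm_mk2_le (x : E) (a : ℝ) : ‖mk2 x a‖ ≤ ‖x‖ + |a| := by
  have h := norm_mk2_sq x a
  nlinarith [norm_nonneg (mk2 x a), norm_nonneg x, abs_nonneg a, sq_abs a]

lemma continuous_fst2 : Continuous (fun p : P2 E ℝ => p.fst) :=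
  WithLp.continuous_fst 2 E ℝ

lemma continuous_snd2 : Continuous (fun p : P2 E ℝ => p.snd) :=
  WithLp.continuous_snd 2 E ℝ

lemma tendsto_mk2_s9 {α : Type*} {l : Filter α} {a : α → E} {b : α → ℝ} {x : E} {y : ℝ}
    (ha : Tendsto a l (𝓝 x)) (hb : Tendsto b l (𝓝 y)) :
    Tendsto (fun k => mk2 (a k) (b k)) l (𝓝 (mk2 x y)) := by
  have := (WithLp.prod_continuous_toLp 2 E ℝ).tendsto (x, y)
  exact this.comp (ha.prodMk_nhds hb)

lemma frechetNC_of_regSubdiff {f : E → EReal} {y : E}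
    (hfin : f y = ((f y).toReal : EReal)) {ξ : E} (hξ : ξ ∈ regSubdiff f y) :
    mk2 ξ (-1 : ℝ) ∈ frechetNC (epiE f) (mk2 y (f y).toReal) := by
  constructor
  · exact ⟨y, (f y).toReal, rfl, le_of_eq hfin⟩
  · intro ε hε
    have hev : ∀ᶠ z in 𝓝 y,
        f y + ((((inner ℝ ξ (z - y) : ℝ)) - ε * ‖z - y‖ : ℝ) : EReal) ≤ f z := hξ ε hε
    have hev2 : ∀ᶠ p in 𝓝[epiE f] (mk2 y (f y).toReal),
        f y + ((((inner ℝ ξ (p.fst - y) : ℝ)) - ε * ‖p.fst - y‖ : ℝ) : EReal) ≤ f p.fst := by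
      apply eventually_nhdsWithin_of_eventually_nhds
      exact (continuous_fst2.tendsto (mk2 y (f y).toReal)).eventually hev
    filter_upwards [hev2, eventually_mem_nhdsWithin] with p hp hmem
    obtain ⟨z, α, rfl, hle⟩ := hmem
    rw [mk2_fst] at hp
    -- hp : f y + (inner ℝ ξ (z-y) - ε ‖z-y‖) ≤ f z ≤ α
    have hle2 : f y + ((((inner ℝ ξ (z - y) : ℝ)) - ε * ‖z - y‖ : ℝ) : EReal) ≤ (α : EReal) :=
      le_trans hp hle
    rw [hfin, ← EReal.coe_add, EReal.coe_le_coe_iff] at hle2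
    rw [mk2_sub, inner_mk2]
    have h1 : ‖z - y‖ ≤ ‖mk2 (z - y) (α - (f y).toReal)‖ := norm_fst_le _ _
    have h2 : (inner ℝ ξ (z - y) : ℝ) + (-1) * (α - (f y).toReal) ≤ ε * ‖z - y‖ := by linarith
    calc (inner ℝ ξ (z - y) : ℝ) + (-1) * (α - (f y).toReal) ≤ ε * ‖z - y‖ := h2
      _ ≤ ε * ‖mk2 (z - y) (α - (f y).toReal)‖ := by
          exact mul_le_mul_of_nonneg_left h1 hε.le

lemma regSubdiff_of_frechetNC {f : E → EReal} {y : E} {a : ℝ} {q : P2 E ℝ}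
    (hq : q ∈ frechetNC (epiE f) (mk2 y a)) (hneg : q.snd < 0) :
    f y = (a : EReal) ∧ (-q.snd)⁻¹ • q.fst ∈ regSubdiff f y := by
  obtain ⟨hmem, hfr⟩ := hq
  obtain ⟨z0, α0, heq, hle0⟩ := hmem
  have hy : z0 = y := by
    have := congrArg (fun p : P2 E ℝ => p.fst) heq; simpa [mk2_fst] using this.symm
  have ha : α0 = a := by
    have := congrArg (fun p : P2 E ℝ => p.snd) heq; simpa [mk2_snd] using this.symm
  rw [hy, ha] at hle0
  have hfley : f y ≤ (a : EReal) := hle0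
  -- Part 1 : f y = a
  have hgraph : f y = (a : EReal) := by
    rcases eq_or_lt_of_le hfley with h | hlt
    · exact h
    exfalso
    obtain ⟨s0, hs0, hs0le⟩ : ∃ s0 > (0:ℝ), ∀ s : ℝ, 0 < s → s ≤ s0 → f y ≤ ((a - s : ℝ) : EReal) := by
      rcases eq_or_ne (f y) ⊥ with hbot | hbot
      · exact ⟨1, one_pos, fun s _ _ => by simp [hbot]⟩
      · have htop : f y ≠ ⊤ := fun h => by simp [h] at hlt
        have hfy : f y = ((f y).toReal : EReal) := (EReal.coe_toReal htop hbot).symm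
        have hba : (f y).toReal < a := by
          rw [hfy] at hlt; exact_mod_cast hlt
        refine ⟨a - (f y).toReal, by linarith, fun s hs hsle => ?_⟩
        rw [hfy]; exact_mod_cast by linarith
    set s : ℕ → ℝ := fun k => s0 / (k + 1) with hs_def
    have hspos : ∀ k, 0 < s k := fun k => by positivity
    have hsle : ∀ k, s k ≤ s0 := fun k => by
      rw [hs_def]
      rw [div_le_iff₀ (by positivity)]
      nlinarith [Nat.cast_nonneg (α := ℝ) k, hs0]
    have hstend : Tendsto s atTop (𝓝 0) := by
      have h2 : Tendsto (fun k : ℕ => s0 * (1 / (k + 1))) atTop (𝓝 (s0 * 0)) :=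
        tendsto_one_div_add_atTop_nhds_zero_nat.const_mul s0
      simpa [hs_def, div_eq_mul_inv, mul_comm, one_div] using h2
    set p : ℕ → P2 E ℝ := fun k => mk2 y (a - s k) with hp_def
    have hpepi : ∀ k, p k ∈ epiE f := fun k =>
      ⟨y, a - s k, rfl, hs0le _ (hspos k) (hsle k)⟩
    have hptend : Tendsto p atTop (𝓝[epiE f] (mk2 y a)) := by
      apply tendsto_nhdsWithin_of_tendsto_nhds_of_eventually_within
      · have h7 : Tendsto (fun k => a - s k) atTop (𝓝 (a - 0)) := tendsto_const_nhds.sub hstend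
        have h8 := tendsto_mk2_s9 (tendsto_const_nhds (x := y) (f := atTop)) h7
        rw [sub_zero] at h8
        exact h8
      · exact Eventually.of_forall hpepi
    have hev := hptend.eventually (hfr (-q.snd / 2) (by linarith))
    obtain ⟨k, hk⟩ := hev.exists
    have hsub : p k - mk2 y a = mk2 (0 : E) (-(s k)) := by
      have h1 : a - s k - a = -(s k) := by ring
      rw [hp_def]
      show mk2 y (a - s k) - mk2 y a = mk2 (0:E) (-(s k))
      rw [mk2_sub, sub_self, h1]
    rw [hsub] at hk
    have hinner : (inner ℝ q (mk2 (0:E) (-(s k))) : ℝ) = q.snd * (-(s k)) := by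
      conv_lhs => rw [← mk2_eta q]
      rw [inner_mk2]; simp
    have hnorm : ‖mk2 (0:E) (-(s k))‖ = s k := by
      have h1 := abs_snd_le (0:E) (-(s k))
      have h2 := norm_mk2_le (0:E) (-(s k))
      have h3 : |(-(s k))| = s k := by rw [abs_neg, abs_of_pos (hspos k)]
      rw [h3] at h1; rw [h3] at h2; simp at h2; linarith
    rw [hinner, hnorm] at hk
    nlinarith [hspos k]
  refine ⟨hgraph, ?_⟩
  -- Part 2
  intro ε hε
  set β := q.snd with hβ
  set ξ := q.fst with hξ
  set c := (-β)⁻¹ with hc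
  have hβpos : 0 < -β := by simp only [hβ]; linarith
  have hcpos : 0 < c := by rw [hc]; exact inv_pos.mpr hβpos
  set C := 1 + ‖c • ξ‖ + ε with hC
  have hCpos : 0 < C := by positivity
  set ε' := (-β) * ε / (2 * C) with hε'
  have hε'pos : 0 < ε' := by
    rw [hε']; exact div_pos (mul_pos hβpos hε) (by positivity)
  have hfr' := eventually_nhdsWithin_iff.mp (hfr ε' hε'pos)
  set φ : E → P2 E ℝ :=
    fun z => mk2 z (a + ((inner ℝ (c • ξ) (z - y) : ℝ) - ε * ‖z - y‖)) with hφ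
  have hφtend : Tendsto φ (𝓝 y) (𝓝 (mk2 y a)) := by
    have hcont : Continuous fun z : E =>
        a + ((inner ℝ (c • ξ) (z - y) : ℝ) - ε * ‖z - y‖) := by
      apply continuous_const.add
      apply Continuous.sub
      · exact Continuous.inner continuous_const (continuous_id.sub continuous_const)
      · exact continuous_const.mul ((continuous_id.sub continuous_const).norm)
    have h := tendsto_mk2_s9 (l := 𝓝 y) tendsto_id (hcont.tendsto y)
    have h9 : a + ((inner ℝ (c • ξ) (y - y) : ℝ) - ε * ‖y - y‖) = a := by simp
    rw [h9] at h
    exact h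
  have hev := hφtend.eventually hfr'
  filter_upwards [hev] with z hz
  by_contra hcon
  push_neg at hcon
  set cz := (inner ℝ (c • ξ) (z - y) : ℝ) - ε * ‖z - y‖ with hcz
  have hfz : f z ≤ ((a + cz : ℝ) : EReal) := by
    rw [hgraph] at hcon
    rw [EReal.coe_add]
    exact le_of_lt hcon
  have hφepi : φ z ∈ epiE f := ⟨z, a + cz, rfl, hfz⟩
  have hineq := hz hφepi
  have hsub : φ z - mk2 y a = mk2 (z - y) cz := by
    rw [hφ]
    show mk2 z (a + cz) - mk2 y a = mk2 (z - y) cz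
    rw [mk2_sub, add_sub_cancel_left]
  rw [hsub] at hineq
  have hinner : (inner ℝ q (mk2 (z - y) cz) : ℝ) = (inner ℝ ξ (z - y) : ℝ) + β * cz := by
    conv_lhs => rw [← mk2_eta q]
    rw [inner_mk2]
  have hβc : β * c = -1 := by
    rw [hc]
    have : β ≠ 0 := by linarith
    field_simp
  have hlhs : (inner ℝ ξ (z - y) : ℝ) + β * cz = (-β) * ε * ‖z - y‖ := by
    rw [hcz, real_inner_smul_left, mul_sub, ← mul_assoc, hβc]
    ring
  have habs : |cz| ≤ (‖c • ξ‖ + ε) * ‖z - y‖ := by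
    rw [hcz]
    have h1 : |(inner ℝ (c • ξ) (z - y) : ℝ)| ≤ ‖c • ξ‖ * ‖z - y‖ := abs_real_inner_le_norm _ _
    have h2 : |(inner ℝ (c • ξ) (z - y) : ℝ) - ε * ‖z - y‖|
        ≤ |(inner ℝ (c • ξ) (z - y) : ℝ)| + |ε * ‖z - y‖| := abs_sub _ _
    have h3 : |ε * ‖z - y‖| = ε * ‖z - y‖ := abs_of_nonneg (by positivity)
    nlinarith
  have hnorm : ‖mk2 (z - y) cz‖ ≤ C * ‖z - y‖ := by
    have h := norm_mk2_le (z - y) cz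
    have hC' : C * ‖z - y‖ = ‖z - y‖ + (‖c • ξ‖ + ε) * ‖z - y‖ := by rw [hC]; ring
    linarith [h, habs]
  have hzy : ‖z - y‖ ≤ 0 := by
    rw [hinner, hlhs] at hineq
    have h4 : ε' * ‖mk2 (z - y) cz‖ ≤ ε' * (C * ‖z - y‖) :=
      mul_le_mul_of_nonneg_left hnorm hε'pos.le
    have h5 : (-β) * ε * ‖z - y‖ ≤ ε' * (C * ‖z - y‖) := le_trans hineq h4
    rw [hε'] at h5
    have h6 : (-β) * ε / (2 * C) * (C * ‖z - y‖) = ((-β) * ε * ‖z - y‖) / 2 := by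
      field_simp
    rw [h6] at h5
    have hD : 0 < (-β) * ε := mul_pos hβpos hε
    have hX : (-β) * ε * ‖z - y‖ ≤ 0 := by linarith
    by_contra hpos
    push_neg at hpos
    have := mul_pos hD hpos
    linarith
  have hzeq : z = y := by
    have h0 := norm_nonneg (z - y)
    have h1 : ‖z - y‖ = 0 := le_antisymm hzy h0
    rwa [norm_eq_zero, sub_eq_zero] at h1
  subst hzeq
  rw [hcz] at hcon
  simp at hcon

lemma mem_aDirSubdiff_of_seq {f : E → EReal} {x : E} (hfin : f x ≠ ⊤ ∧ f x ≠ ⊥) {h ξ : E}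
    {t νs : ℕ → ℝ} {hk : ℕ → E} {qk : ℕ → P2 E ℝ}
    (htpos : ∀ k, 0 < t k) (ht0 : Tendsto t atTop (𝓝 0))
    (hhk : Tendsto hk atTop (𝓝 h))
    (htν : Tendsto (fun k => t k * νs k) atTop (𝓝 0))
    (hqk : Tendsto qk atTop (𝓝 (mk2 ξ (-1 : ℝ))))
    (hfr : ∀ k, qk k ∈ frechetNC (epiE f) (mk2 x (f x).toReal + t k • mk2 (hk k) (νs k))) :
    ξ ∈ aDirSubdiff f x h := by
  have hfst : Tendsto (fun k => (qk k).fst) atTop (𝓝 ξ) :=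
    (continuous_fst2.tendsto (mk2 ξ (-1 : ℝ))).comp hqk
  have hsnd : Tendsto (fun k => (qk k).snd) atTop (𝓝 (-1 : ℝ)) :=
    (continuous_snd2.tendsto (mk2 ξ (-1 : ℝ))).comp hqk
  obtain ⟨N, hN⟩ := (hsnd.eventually_lt_const (by norm_num : (-1:ℝ) < 0)).exists_forall_of_atTop
  have hfr' : ∀ k, qk k ∈ frechetNC (epiE f)
      (mk2 (x + t k • hk k) ((f x).toReal + t k * νs k)) := by
    intro k
    have := hfr k
    rwa [mk2_add_smul, mk2_fst, mk2_snd] at this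
  have hB : ∀ k, N ≤ k → f (x + t k • hk k) = (((f x).toReal + t k * νs k : ℝ) : EReal) ∧
      (-(qk k).snd)⁻¹ • (qk k).fst ∈ regSubdiff f (x + t k • hk k) :=
    fun k hk' => regSubdiff_of_frechetNC (hfr' k) (hN k hk')
  refine ⟨fun k => t (k + N), fun k => hk (k + N),
    fun k => (-(qk (k + N)).snd)⁻¹ • (qk (k + N)).fst, fun k => htpos _,
    (tendsto_add_atTop_iff_nat N).2 ht0, (tendsto_add_atTop_iff_nat N).2 hhk, ?_, ?_, ?_⟩
  · have hscal : Tendsto (fun k => (-(qk k).snd)⁻¹) atTop (𝓝 1) := by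
      have h1 : Tendsto (fun k => -(qk k).snd) atTop (𝓝 1) := by
        simpa using hsnd.neg
      simpa using h1.inv₀ one_ne_zero
    have := hscal.smul hfst
    rw [one_smul] at this
    exact (tendsto_add_atTop_iff_nat N).2 this
  · have hcoe : Tendsto (fun k => (((f x).toReal + t k * νs k : ℝ) : EReal)) atTop (𝓝 (f x)) := by
      have h1 : Tendsto (fun k => (f x).toReal + t k * νs k) atTop (𝓝 ((f x).toReal)) := by
        simpa using (tendsto_const_nhds (x := (f x).toReal) (f := atTop)).add htν
      have h2 := (continuous_coe_real_ereal.tendsto ((f x).toReal)).comp h1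
      rwa [EReal.coe_toReal hfin.1 hfin.2] at h2
    have hcoe' := (tendsto_add_atTop_iff_nat N).2 hcoe
    refine hcoe'.congr fun k => ?_
    exact ((hB (k + N) (Nat.le_add_left N k)).1).symm
  · exact fun k => (hB (k + N) (Nat.le_add_left N k)).2



/-- Forward direction workhorse. -/
lemma forward_aux {f : E → EReal} {x : E} (hfin : f x ≠ ⊤ ∧ f x ≠ ⊥) {h ξ : E}
    (hξ : ξ ∈ aDirSubdiff f x h) :
    mk2 ξ (-1:ℝ) ∈ (⋃ ν ∈ gderivE f x h, dirNC (epiE f) (mk2 x (f x).toReal) (mk2 h ν)) ∪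
      NepiInfty f x h atTop ∪ NepiInfty f x h atBot := by
  obtain ⟨t, hk, ξk, htpos, ht0, hhk, hξk, hfc, hsub⟩ := hξ
  set a := (f x).toReal with ha
  have hev : ∀ᶠ k in atTop, f (x + t k • hk k) ≠ ⊤ ∧ f (x + t k • hk k) ≠ ⊥ :=
    (hfc.eventually_ne hfin.1).and (hfc.eventually_ne hfin.2)
  obtain ⟨N, hN⟩ := hev.exists_forall_of_atTop
  set t1 : ℕ → ℝ := fun k => t (k + N) with ht1
  set hk1 : ℕ → E := fun k => hk (k + N) with hhk1d
  set ξk1 : ℕ → E := fun k => ξk (k + N) with hξk1d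
  have htpos1 : ∀ k, 0 < t1 k := fun k => htpos _
  have ht01 : Tendsto t1 atTop (𝓝 0) := (tendsto_add_atTop_iff_nat N).2 ht0
  have hhk1t : Tendsto hk1 atTop (𝓝 h) := (tendsto_add_atTop_iff_nat N).2 hhk
  have hξk1t : Tendsto ξk1 atTop (𝓝 ξ) := (tendsto_add_atTop_iff_nat N).2 hξk
  have hfc1 : Tendsto (fun k => f (x + t1 k • hk1 k)) atTop (𝓝 (f x)) :=
    (tendsto_add_atTop_iff_nat N).2 hfc
  have hfin1 : ∀ k, f (x + t1 k • hk1 k) ≠ ⊤ ∧ f (x + t1 k • hk1 k) ≠ ⊥ :=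
    fun k => hN _ (Nat.le_add_left N k)
  set ν : ℕ → ℝ := fun k => ((f (x + t1 k • hk1 k)).toReal - a) / t1 k with hνd
  have hkey : ∀ k, a + t1 k * ν k = (f (x + t1 k • hk1 k)).toReal := by
    intro k
    rw [hνd]
    have hne : t1 k ≠ 0 := ne_of_gt (htpos1 k)
    field_simp; ring
  have hgk : ∀ k, f (x + t1 k • hk1 k) = (((f (x + t1 k • hk1 k)).toReal : ℝ) : EReal) :=
    fun k => (EReal.coe_toReal (hfin1 k).1 (hfin1 k).2).symm
  have hA : ∀ k, mk2 (ξk1 k) (-1:ℝ) ∈ frechetNC (epiE f)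
      (mk2 x a + t1 k • mk2 (hk1 k) (ν k)) := by
    intro k
    rw [mk2_add_smul, mk2_fst, mk2_snd, hkey k]
    exact frechetNC_of_regSubdiff (hgk k) (hsub (k + N))
  have htoReal : Tendsto (fun k => (f (x + t1 k • hk1 k)).toReal) atTop (𝓝 a) :=
    (EReal.tendsto_toReal hfin.1 hfin.2).comp hfc1
  have htν : Tendsto (fun k => t1 k * ν k) atTop (𝓝 0) := by
    have h1 : ∀ k, t1 k * ν k = (f (x + t1 k • hk1 k)).toReal - a := by
      intro k
      have := hkey k
      linarith
    have h2 : Tendsto (fun k => (f (x + t1 k • hk1 k)).toReal - a) atTop (𝓝 (a - a)) :=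
      htoReal.sub tendsto_const_nhds
    rw [sub_self] at h2
    exact h2.congr fun k => (h1 k).symm
  obtain ⟨L, φ, hφ, hLt⟩ := CompactSpace.tendsto_subseq (fun k => ((ν k : ℝ) : EReal))
  have hφat : Tendsto φ atTop atTop := hφ.tendsto_atTop
  induction L with
  | bot =>
    refine Or.inr ⟨fun k => t1 (φ k), fun k => ν (φ k), fun k => hk1 (φ k),
      fun k => mk2 (ξk1 (φ k)) (-1:ℝ), fun k => htpos1 _, ht01.comp hφat, hhk1t.comp hφat, ?_,
      htν.comp hφat, tendsto_mk2_s9 (hξk1t.comp hφat) tendsto_const_nhds, fun k => hA (φ k)⟩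
    rw [EReal.tendsto_nhds_bot_iff_real] at hLt
    refine tendsto_atBot.2 fun b => ?_
    refine (hLt b).mono fun k hk => ?_
    have h9 : ((ν (φ k) : ℝ) : EReal) < ((b : ℝ) : EReal) := hk
    exact_mod_cast h9.le
  | coe r =>
    have hνr : Tendsto (fun k => ν (φ k)) atTop (𝓝 r) := EReal.tendsto_coe.mp hLt
    refine Or.inl (Or.inl ?_)
    have hpts : ∀ k, mk2 x a + t1 (φ k) • mk2 (hk1 (φ k)) (ν (φ k)) ∈ graphE f := by
      intro k
      rw [mk2_add_smul, mk2_fst, mk2_snd, hkey (φ k)]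
      exact ⟨_, _, rfl, hgk (φ k)⟩
    refine Set.mem_biUnion (?_ : r ∈ gderivE f x h) ?_
    · exact ⟨fun k => mk2 (hk1 (φ k)) (ν (φ k)), fun k => t1 (φ k),
        tendsto_mk2_s9 (hhk1t.comp hφat) hνr, fun k => htpos1 _, ht01.comp hφat, hpts⟩
    · exact ⟨fun k => t1 (φ k), fun k => mk2 (hk1 (φ k)) (ν (φ k)),
        fun k => mk2 (ξk1 (φ k)) (-1:ℝ), fun k => htpos1 _, ht01.comp hφat,
        tendsto_mk2_s9 (hhk1t.comp hφat) hνr,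
        tendsto_mk2_s9 (hξk1t.comp hφat) tendsto_const_nhds, fun k => hA (φ k)⟩
  | top =>
    refine Or.inl (Or.inr ⟨fun k => t1 (φ k), fun k => ν (φ k), fun k => hk1 (φ k),
      fun k => mk2 (ξk1 (φ k)) (-1:ℝ), fun k => htpos1 _, ht01.comp hφat, hhk1t.comp hφat, ?_,
      htν.comp hφat, tendsto_mk2_s9 (hξk1t.comp hφat) tendsto_const_nhds, fun k => hA (φ k)⟩)
    rw [EReal.tendsto_nhds_top_iff_real] at hLt
    refine tendsto_atTop.2 fun b => ?_
    refine (hLt b).mono fun k hk => ?_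
    have h9 : ((b : ℝ) : EReal) < ((ν (φ k) : ℝ) : EReal) := hk
    exact_mod_cast h9.le

/-- **Proposition 4.1.** Characterization of the analytic directional limiting subdifferential
via normal cones to the epigraph. -/
theorem aDirSubdiff_eq_union_normal_cones {n : ℕ} (f : Euc n → EReal)
    (hlsc : LowerSemicontinuous f) (x : Euc n) (hfin : f x ≠ ⊤ ∧ f x ≠ ⊥) (h : Euc n) :
    aDirSubdiff f x h = {ξ : Euc n | mk2 ξ (-1 : ℝ) ∈
      (⋃ ν ∈ gderivE f x h, dirNC (epiE f) (mk2 x (f x).toReal) (mk2 h ν)) ∪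
      NepiInfty f x h atTop ∪ NepiInfty f x h atBot} := by
  ext ξ
  simp only [Set.mem_setOf_eq]
  constructor
  · intro hξ
    exact forward_aux hfin hξ
  · intro hmem
    rcases hmem with (hm | hm) | hm
    · rw [Set.mem_iUnion₂] at hm
      obtain ⟨ν0, _, hd⟩ := hm
      obtain ⟨tk, uk, qk, hpos, ht0, huk, hqk, hfr⟩ := hd
      have hsnd : Tendsto (fun k => (uk k).snd) atTop (𝓝 ν0) :=
        (continuous_snd2.tendsto (mk2 h ν0)).comp huk
      have hhkt : Tendsto (fun k => (uk k).fst) atTop (𝓝 h) :=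
        (continuous_fst2.tendsto (mk2 h ν0)).comp huk
      have htν : Tendsto (fun k => tk k * (uk k).snd) atTop (𝓝 0) := by
        have := ht0.mul hsnd
        simpa using this
      exact mem_aDirSubdiff_of_seq hfin hpos ht0 hhkt htν hqk (fun k => hfr k)
    · obtain ⟨t, νs, hk, qk, hpos, ht0, hhk, _, htν, hqk, hfr⟩ := hm
      exact mem_aDirSubdiff_of_seq hfin hpos ht0 hhk htν hqk hfr
    · obtain ⟨t, νs, hk, qk, hpos, ht0, hhk, _, htν, hqk, hfr⟩ := hm
      exact mem_aDirSubdiff_of_seq hfin hpos ht0 hhk htν hqk hfr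


end Paper
end
end

section
/- Let f = min{f₁, …, f_l} for lower semicontinuous functions f_i : ℝⁿ → ℝ ∪ {±∞}, let x̄ ∈ dom f and let (h, ν) ∈ ℝⁿ × ℝ. Define I₀(x̄, (h, ν)) := {i : f(x̄) = f_i(x̄), ν ∈ Df_i(x̄)(h) and ∂f_i(x̄; (h, ν)) ≠ ∅}. Then ∂f(x̄; (h, ν)) ⊂ ⋃_{i ∈ I₀(x̄, (h, ν))} ∂f_i(x̄; (h, ν)). -/
open Filter Topology Set Pointwise

noncomputable section

namespace Paper

variable {E : Type*} [NormedAddCommGroup E] [InnerProductSpace ℝ E]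
variable {F : Type*} [NormedAddCommGroup F] [InnerProductSpace ℝ F]

lemma mk2_inj {a c : E} {b d : ℝ} (h : mk2 a b = mk2 c d) : a = c ∧ b = d := by
  have := (WithLp.equiv 2 (E × ℝ)).symm.injective h
  exact ⟨congrArg Prod.fst this, congrArg Prod.snd this⟩

lemma frechetNC_anti {Ω Ω' : Set E} (hsub : Ω' ⊆ Ω) {x : E} (hx : x ∈ Ω') :
    frechetNC Ω x ⊆ frechetNC Ω' x := by
  rintro ξ ⟨-, hξ⟩
  exact ⟨hx, fun ε hε => (hξ ε hε).filter_mono (nhdsWithin_mono x hsub)⟩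

lemma epiE_subset {f g : E → EReal} (h : ∀ y, f y ≤ g y) : epiE g ⊆ epiE f := by
  rintro p ⟨x, α, rfl, hα⟩
  exact ⟨x, α, rfl, (h x).trans hα⟩

/-- **Proposition 4.6 (pointwise minimum).** -/
theorem dirSubdiff_min {n l : ℕ} (fi : Fin l → Euc n → EReal)
    (hlsc : ∀ i, LowerSemicontinuous (fi i)) (x h : Euc n) (ν : ℝ)
    (f : Euc n → EReal) (hf : f = fun y => ⨅ i, fi i y) (hdom : f x ≠ ⊤ ∧ f x ≠ ⊥) :
    dirSubdiff f x h ν ⊆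
      ⋃ i ∈ {i : Fin l | (f x = fi i x ∧ ν ∈ gderivE (fi i) x h) ∧
        (dirSubdiff (fi i) x h ν).Nonempty}, dirSubdiff (fi i) x h ν := by
  intro ξ hξ
  obtain ⟨t, u, w, ht0, htlim, hulim, hwlim, hmem⟩ := hξ
  -- f ≤ fi pointwise
  have hle : ∀ i y, f y ≤ fi i y := fun i y => hf ▸ iInf_le _ i
  -- Fin l nonempty
  have hne : Nonempty (Fin l) := by
    by_contra hl
    have he : IsEmpty (Fin l) := not_nonempty_iff.mp hl
    apply hdom.1
    rw [hf]
    simp only []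
    rw [iInf_of_isEmpty, sInf_empty]
  -- component sequences
  set hk : ℕ → Euc n := fun k => (u k).fst with hhkdef
  set νk : ℕ → ℝ := fun k => (u k).snd with hνkdef
  have hhk : Tendsto hk atTop (𝓝 h) := by
    have := ((WithLp.prod_continuous_ofLp 2 (Euc n) ℝ).tendsto _).comp hulim
    exact (continuous_fst.tendsto _).comp this
  have hνk : Tendsto νk atTop (𝓝 ν) := by
    have := ((WithLp.prod_continuous_ofLp 2 (Euc n) ℝ).tendsto _).comp hulim
    exact (continuous_snd.tendsto _).comp this
  set p : ℕ → Euc n := fun k => x + t k • hk k with hpdef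
  set α : ℕ → ℝ := fun k => (f x).toReal + t k * νk k with hαdef
  have hplim : Tendsto p atTop (𝓝 x) := by
    have : Tendsto (fun k => t k • hk k) atTop (𝓝 ((0:ℝ) • h)) := htlim.smul hhk
    rw [zero_smul] at this
    simpa using (tendsto_const_nhds.add this)
  have hαlim : Tendsto α atTop (𝓝 ((f x).toReal)) := by
    have : Tendsto (fun k => t k * νk k) atTop (𝓝 (0 * ν)) := htlim.mul hνk
    rw [zero_mul] at this
    simpa using (tendsto_const_nhds.add this)
  -- rewrite base points
  have hbase : ∀ k, mk2 x (f x).toReal + t k • u k = mk2 (p k) (α k) := by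
    intro k
    have : u k = mk2 (hk k) (νk k) := rfl
    rw [this]
    rfl
  -- choose indices achieving epigraph membership
  have hchoice : ∀ k, ∃ i, fi i (p k) ≤ ((α k : ℝ) : EReal) := by
    intro k
    have hz := (hmem k).1
    rw [hbase k] at hz
    obtain ⟨x', α', heq, hα'⟩ := hz
    obtain ⟨h1, h2⟩ := mk2_inj heq
    obtain ⟨i, hi⟩ := Finite.exists_min (fun i => fi i (p k))
    refine ⟨i, ?_⟩
    have : f (p k) ≤ ((α k : ℝ) : EReal) := by rw [h1, h2]; exact hα'
    calc fi i (p k) ≤ f (p k) := by rw [hf]; exact le_iInf hi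
    _ ≤ _ := this
  choose g hg using hchoice
  -- second components of w tend to -1
  have hwsnd : Tendsto (fun k => (w k).snd) atTop (𝓝 (-1 : ℝ)) := by
    have := ((WithLp.prod_continuous_ofLp 2 (Euc n) ℝ).tendsto _).comp hwlim
    exact (continuous_snd.tendsto _).comp this
  have hev : ∀ᶠ k in atTop, (w k).snd < -(1/2) := by
    apply hwsnd.eventually_lt_const
    norm_num
  -- pigeonhole + extraction
  obtain ⟨i, hifib⟩ := Finite.exists_infinite_fiber g
  have hfreq : ∃ᶠ k in atTop, g k = i := by
    rw [Nat.frequently_atTop_iff_infinite]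
    exact Set.infinite_coe_iff.mp hifib
  obtain ⟨K, hKmono, hK⟩ := extraction_of_frequently_atTop (hfreq.and_eventually hev)
  have hKtop : Tendsto K atTop atTop := hKmono.tendsto_atTop
  have hgi : ∀ k, fi i (p (K k)) ≤ ((α (K k) : ℝ) : EReal) := by
    intro k; have := hg (K k); rwa [(hK k).1] at this
  -- f x = fi i x
  have hxi : f x = fi i x := by
    refine le_antisymm (hle i x) ?_
    by_contra hlt
    obtain ⟨y, hy1, hy2⟩ := exists_between (lt_of_not_ge hlt)
    have e1 : ∀ᶠ k in atTop, y < fi i (p (K k)) :=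
      ((hplim.comp hKtop).eventually (hlsc i x y hy2))
    have hcoe : Tendsto (fun k => ((α (K k) : ℝ) : EReal)) atTop (𝓝 (f x)) := by
      have : Tendsto (fun k => ((α (K k) : ℝ) : EReal)) atTop (𝓝 (((f x).toReal : ℝ) : EReal)) :=
        (continuous_coe_real_ereal.tendsto _).comp (hαlim.comp hKtop)
      rwa [EReal.coe_toReal hdom.1 hdom.2] at this
    have e2 : ∀ᶠ k in atTop, ((α (K k) : ℝ) : EReal) < y := hcoe.eventually_lt_const hy1
    obtain ⟨k, hk1, hk2⟩ := (e1.and e2).exists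
    exact absurd ((hk1.trans_le (hgi k)).trans hk2) (lt_irrefl y)
  -- graph equalities
  have hgraph : ∀ k, fi i (p (K k)) = ((α (K k) : ℝ) : EReal) := by
    intro k
    rcases eq_or_lt_of_le (hgi k) with heq | hlt
    · exact heq
    exfalso
    have hfr := (hmem (K k)).2
    rw [hbase (K k)] at hfr
    have hflt : f (p (K k)) < ((α (K k) : ℝ) : EReal) := (hle i _).trans_lt hlt
    obtain ⟨δ, hδ0, hδ⟩ : ∃ δ > (0:ℝ), f (p (K k)) ≤ ((α (K k) - δ : ℝ) : EReal) := by
      rcases eq_or_ne (f (p (K k))) ⊥ with hb | hb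
      · exact ⟨1, one_pos, by rw [hb]; exact bot_le⟩
      · have hnt : f (p (K k)) ≠ ⊤ := hflt.ne_top
        have hco : (((f (p (K k))).toReal : ℝ) : EReal) = f (p (K k)) := EReal.coe_toReal hnt hb
        refine ⟨α (K k) - (f (p (K k))).toReal, ?_, ?_⟩
        · rw [← hco] at hflt
          exact sub_pos.mpr (EReal.coe_lt_coe_iff.mp hflt)
        · rw [← hco]
          apply EReal.coe_le_coe_iff.mpr
          ring_nf
          exact le_refl _
    set z : P2 (Euc n) ℝ := mk2 (p (K k)) (α (K k)) with hzdef
    set ym : ℕ → P2 (Euc n) ℝ := fun m => mk2 (p (K k)) (α (K k) - δ / (m + 1)) with hymdef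
    have hsm : ∀ m : ℕ, 0 < δ / (m + 1 : ℝ) := by
      intro m; positivity
    have hymem : ∀ m, ym m ∈ epiE f := by
      intro m
      refine ⟨p (K k), α (K k) - δ / (m+1), rfl, hδ.trans ?_⟩
      apply EReal.coe_le_coe_iff.mpr
      have : δ / (m + 1 : ℝ) ≤ δ := by
        apply div_le_self hδ0.le
        have : (0:ℝ) ≤ (m:ℝ) := Nat.cast_nonneg m
        linarith
      linarith
    have hylim : Tendsto ym atTop (𝓝 z) := by
      have h2 : Tendsto (fun m : ℕ => α (K k) - δ / (m + 1)) atTop (𝓝 (α (K k))) := by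
        have h1 : Tendsto (fun m : ℕ => δ * (1 / (m + 1 : ℝ))) atTop (𝓝 (δ * 0)) :=
          tendsto_const_nhds.mul tendsto_one_div_add_atTop_nhds_zero_nat
        rw [mul_zero] at h1
        have h3 : Tendsto (fun m : ℕ => α (K k) - δ * (1 / (m + 1 : ℝ))) atTop
            (𝓝 (α (K k) - 0)) := Tendsto.sub tendsto_const_nhds h1
        rw [sub_zero] at h3
        simpa [div_eq_mul_inv] using h3
      have hc : Continuous (fun q : Euc n × ℝ => mk2 q.1 q.2) :=
        WithLp.prod_continuous_toLp 2 (Euc n) ℝ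
      exact (hc.tendsto _).comp (tendsto_const_nhds.prodMk_nhds h2)
    have hylim' : Tendsto ym atTop (𝓝[epiE f] z) :=
      tendsto_nhdsWithin_of_tendsto_nhds_of_eventually_within ym hylim
        (Eventually.of_forall hymem)
    have hfr2 := hylim'.eventually (hfr (1/4) (by norm_num))
    obtain ⟨m, hm⟩ := hfr2.exists
    have hdiff : ym m - z = mk2 0 (-(δ / (m+1))) := by
      have : ym m - z = mk2 (p (K k) - p (K k)) (α (K k) - δ / (m+1) - α (K k)) := rfl
      rw [this]
      congr 1
      · exact sub_self _
      · ring
    rw [hdiff] at hm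
    have hinner : (inner ℝ (w (K k)) (mk2 (0 : Euc n) (-(δ / (m+1)))) : ℝ)
        = (w (K k)).snd * (-(δ / (m+1))) := by
      rw [WithLp.prod_inner_apply]
      simp [mk2, RCLike.inner_apply, WithLp.equiv_symm_apply, mul_comm]
    have hnorm : ‖mk2 (0 : Euc n) (-(δ / (m+1)))‖ = δ / (m+1) := by
      rw [show mk2 (0 : Euc n) (-(δ / (m+1))) = WithLp.toLp 2 ((0 : Euc n), -(δ / (m+1))) from rfl,
        WithLp.norm_toLp_snd, Real.norm_eq_abs, abs_neg, abs_of_pos (hsm m)]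
    rw [hinner, hnorm] at hm
    have hw2 := (hK k).2
    nlinarith [hsm m]
  -- membership in dirSubdiff (fi i)
  have hfix : (fi i x).toReal = (f x).toReal := by rw [hxi]
  have hepi : epiE (fi i) ⊆ epiE f := epiE_subset (hle i)
  have hsub : ξ ∈ dirSubdiff (fi i) x h ν := by
    refine ⟨t ∘ K, u ∘ K, w ∘ K, fun k => ht0 (K k), htlim.comp hKtop, hulim.comp hKtop,
      hwlim.comp hKtop, fun k => ?_⟩
    have hb : mk2 x (fi i x).toReal + (t ∘ K) k • (u ∘ K) k = mk2 (p (K k)) (α (K k)) := by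
      rw [show mk2 x (fi i x).toReal = mk2 x (f x).toReal by rw [hfix]]
      exact hbase (K k)
    rw [hb]
    have hzin : mk2 (p (K k)) (α (K k)) ∈ epiE (fi i) :=
      ⟨p (K k), α (K k), rfl, le_of_eq (hgraph k)⟩
    have := (hmem (K k)).2
    have hmem' := hmem (K k)
    rw [hbase (K k)] at hmem'
    exact frechetNC_anti hepi hzin hmem'
  -- graphical derivative membership
  have hgd : ν ∈ gderivE (fi i) x h := by
    refine ⟨u ∘ K, t ∘ K, hulim.comp hKtop, fun k => ht0 (K k), htlim.comp hKtop, fun k => ?_⟩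
    have hb : mk2 x (fi i x).toReal + (t ∘ K) k • (u ∘ K) k = mk2 (p (K k)) (α (K k)) := by
      rw [show mk2 x (fi i x).toReal = mk2 x (f x).toReal by rw [hfix]]
      exact hbase (K k)
    rw [hb]
    exact ⟨p (K k), α (K k), rfl, hgraph k⟩
  simp only [Set.mem_iUnion, Set.mem_setOf_eq]
  exact ⟨i, ⟨⟨hxi, hgd⟩, ⟨ξ, hsub⟩⟩, hsub⟩

end Paper
end
end
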